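/- arXiv:2301.08672 — 3 statements merged into one kernel-verified Lean document; each statement's English description precedes it below -/
import Mathlib

section
/- Let L be a regular-epi localization functor on the category XMod of crossed modules of groups. Then L is conditionally flat if and only if L is admissible for the class of regular epimorphisms. -/
set_option linter.unusedVariables false

/-- A crossed module of groups `(M, G, d)` with `G` acting on `M`. -/
structure XMod : Type 1 where
  M : Type
  G : Type
  [grpM : Group M]
  [grpG : Group G]
  act : G →* MulAut M
  d : M →* G
  act_d : ∀ (b : G) (t : M), d (act b t) = b * d t * b⁻¹
  peiffer : ∀ (t s : M), act (d t) s = t * s * t⁻¹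

attribute [instance] XMod.grpM XMod.grpG

/-- A morphism of crossed modules. -/
structure XModHom (N T : XMod) where
  f1 : N.M →* T.M
  f2 : N.G →* T.G
  comm_d : ∀ n, T.d (f1 n) = f2 (N.d n)
  equiv : ∀ (b : N.G) (n : N.M), f1 (N.act b n) = T.act (f2 b) (f1 n)

namespace XModHom

theorem ext {N T : XMod} {f g : XModHom N T} (h1 : f.f1 = g.f1) (h2 : f.f2 = g.f2) :
    f = g := by
  cases f; cases g; cases h1; cases h2; rfl

/-- The identity morphism. -/
def id (T : XMod) : XModHom T T :=
  ⟨MonoidHom.id _, MonoidHom.id _, fun _ => rfl, fun _ _ => rfl⟩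

/-- Composition of morphisms of crossed modules. -/
def comp {A B C : XMod} (g : XModHom B C) (f : XModHom A B) : XModHom A C where
  f1 := g.f1.comp f.f1
  f2 := g.f2.comp f.f2
  comm_d := by intro n; simp [MonoidHom.comp_apply, g.comm_d, f.comm_d]
  equiv := by intro b n; simp [MonoidHom.comp_apply, f.equiv, g.equiv]

/-- The trivial morphism of crossed modules. -/
def triv (A B : XMod) : XModHom A B where
  f1 := 1
  f2 := 1
  comm_d := by intro n; simp
  equiv := by intro b n; simp

/-- A morphism of crossed modules is an isomorphism if it has a two-sided inverse. -/
def IsIso {A B : XMod} (f : XModHom A B) : Prop :=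
  ∃ g : XModHom B A, comp g f = id A ∧ comp f g = id B

/-- Regular epimorphisms of crossed modules are exactly the componentwise
surjective morphisms. -/
def RegEpi {A B : XMod} (f : XModHom A B) : Prop :=
  Function.Surjective f.f1 ∧ Function.Surjective f.f2

/-- `κ` is a kernel of `α` (in the categorical sense). -/
def IsKernelOf {N T Q : XMod} (κ : XModHom N T) (α : XModHom T Q) : Prop :=
  comp α κ = triv N Q ∧
    ∀ (X : XMod) (u : XModHom X T), comp α u = triv X Q →
      ∃! v : XModHom X N, comp κ v = u

end XModHom

/-- `1 → N → T → Q → 1` is a short exact sequence of crossed modules. -/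
def ShortExact {N T Q : XMod} (κ : XModHom N T) (α : XModHom T Q) : Prop :=
  XModHom.IsKernelOf κ α ∧ XModHom.RegEpi α
/-- A localization functor (coaugmented idempotent functor) on `XMod`. -/
structure LocalizationFunctor where
  obj : XMod → XMod
  map : ∀ {A B : XMod}, XModHom A B → XModHom (obj A) (obj B)
  map_id : ∀ A : XMod, map (XModHom.id A) = XModHom.id (obj A)
  map_comp : ∀ {A B C : XMod} (f : XModHom A B) (g : XModHom B C),
    map (XModHom.comp g f) = XModHom.comp (map g) (map f)
  ell : ∀ A : XMod, XModHom A (obj A)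
  natural : ∀ {A B : XMod} (f : XModHom A B),
    XModHom.comp (ell B) f = XModHom.comp (map f) (ell A)
  iso_ell_obj : ∀ A : XMod, XModHom.IsIso (ell (obj A))
  iso_map_ell : ∀ A : XMod, XModHom.IsIso (map (ell A))

namespace LocalizationFunctor

/-- A crossed module is `L`-local if its coaugmentation is an isomorphism. -/
def IsLocal (L : LocalizationFunctor) (X : XMod) : Prop :=
  XModHom.IsIso (L.ell X)

/-- `L` is a regular-epi localization if every coaugmentation morphism is a
regular epimorphism. -/
def RegEpiLoc (L : LocalizationFunctor) : Prop :=
  ∀ X : XMod, XModHom.RegEpi (L.ell X)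

/-- A short exact sequence is `L`-flat if applying `L` yields a short exact sequence. -/
def LFlat (L : LocalizationFunctor) {N T Q : XMod} (κ : XModHom N T) (α : XModHom T Q) : Prop :=
  ShortExact (L.map κ) (L.map α)

end LocalizationFunctor
section Pullback

variable {T Q Q' : XMod} (α : XModHom T Q) (g : XModHom Q' Q)

/-- Level-1 part of the pullback `T ×_Q Q'`, computed componentwise. -/
def pbM : Subgroup (T.M × Q'.M) where
  carrier := {p | α.f1 p.1 = g.f1 p.2}
  one_mem' := by simp
  mul_mem' := by
    intro a b ha hb
    simp only [Set.mem_setOf_eq, Prod.fst_mul, Prod.snd_mul, map_mul] at *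
    rw [ha, hb]
  inv_mem' := by
    intro a ha
    simp only [Set.mem_setOf_eq, Prod.fst_inv, Prod.snd_inv, map_inv] at *
    rw [ha]

/-- Level-2 part of the pullback `T ×_Q Q'`, computed componentwise. -/
def pbG : Subgroup (T.G × Q'.G) where
  carrier := {p | α.f2 p.1 = g.f2 p.2}
  one_mem' := by simp
  mul_mem' := by
    intro a b ha hb
    simp only [Set.mem_setOf_eq, Prod.fst_mul, Prod.snd_mul, map_mul] at *
    rw [ha, hb]
  inv_mem' := by
    intro a ha
    simp only [Set.mem_setOf_eq, Prod.fst_inv, Prod.snd_inv, map_inv] at *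
    rw [ha]

theorem mem_pbM_iff (p : T.M × Q'.M) : p ∈ pbM α g ↔ α.f1 p.1 = g.f1 p.2 := Iff.rfl

theorem mem_pbG_iff (p : T.G × Q'.G) : p ∈ pbG α g ↔ α.f2 p.1 = g.f2 p.2 := Iff.rfl

theorem pb_act_mem {b : T.G × Q'.G} (hb : b ∈ pbG α g) {p : T.M × Q'.M}
    (hp : p ∈ pbM α g) : (T.act b.1 p.1, Q'.act b.2 p.2) ∈ pbM α g := by
  have hb' : α.f2 b.1 = g.f2 b.2 := hb
  have hp' : α.f1 p.1 = g.f1 p.2 := hp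
  show α.f1 (T.act b.1 p.1) = g.f1 (Q'.act b.2 p.2)
  rw [α.equiv, g.equiv, hb', hp']

theorem XMod.act_inv_act (X : XMod) (b : X.G) (t : X.M) :
    X.act b⁻¹ (X.act b t) = t := by
  rw [← MulAut.mul_apply, ← map_mul, inv_mul_cancel, map_one, MulAut.one_apply]

theorem XMod.act_act_inv (X : XMod) (b : X.G) (t : X.M) :
    X.act b (X.act b⁻¹ t) = t := by
  rw [← MulAut.mul_apply, ← map_mul, mul_inv_cancel, map_one, MulAut.one_apply]

/-- The action of an element of the pullback on the level-1 part, as a group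
automorphism. -/
def pbActEquiv (b : ↥(pbG α g)) : ↥(pbM α g) ≃* ↥(pbM α g) where
  toFun p := ⟨(T.act b.1.1 p.1.1, Q'.act b.1.2 p.1.2), pb_act_mem α g b.2 p.2⟩
  invFun p := ⟨(T.act b.1.1⁻¹ p.1.1, Q'.act b.1.2⁻¹ p.1.2),
    pb_act_mem α g ((pbG α g).inv_mem b.2) p.2⟩
  left_inv p := by
    apply Subtype.ext
    exact Prod.ext (T.act_inv_act _ _) (Q'.act_inv_act _ _)
  right_inv p := by
    apply Subtype.ext
    exact Prod.ext (T.act_act_inv _ _) (Q'.act_act_inv _ _)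
  map_mul' p q := by
    apply Subtype.ext
    exact Prod.ext (map_mul _ _ _) (map_mul _ _ _)

/-- The pullback `T ×_Q Q'` of `α : T → Q` along `g : Q' → Q`, computed
componentwise. -/
def pbXMod : XMod where
  M := ↥(pbM α g)
  G := ↥(pbG α g)
  act :=
    { toFun := pbActEquiv α g
      map_one' := by
        apply MulEquiv.ext
        intro p
        apply Subtype.ext
        apply Prod.ext
        · show T.act (1 : ↥(pbG α g)).1.1 p.1.1 = p.1.1
          simp
        · show Q'.act (1 : ↥(pbG α g)).1.2 p.1.2 = p.1.2
          simp
      map_mul' := by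
        intro b c
        apply MulEquiv.ext
        intro p
        apply Subtype.ext
        apply Prod.ext
        · show T.act (b * c).1.1 p.1.1 = T.act b.1.1 (T.act c.1.1 p.1.1)
          simp [map_mul]
        · show Q'.act (b * c).1.2 p.1.2 = Q'.act b.1.2 (Q'.act c.1.2 p.1.2)
          simp [map_mul] }
  d :=
    { toFun := fun p => ⟨(T.d p.1.1, Q'.d p.1.2), by
        have hp : α.f1 p.1.1 = g.f1 p.1.2 := p.2
        show α.f2 (T.d p.1.1) = g.f2 (Q'.d p.1.2)
        rw [← α.comm_d, ← g.comm_d, hp]⟩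
      map_one' := by
        apply Subtype.ext
        apply Prod.ext <;> simp
      map_mul' := by
        intro p q
        apply Subtype.ext
        apply Prod.ext <;> simp }
  act_d := by
    intro b p
    apply Subtype.ext
    apply Prod.ext
    · exact T.act_d _ _
    · exact Q'.act_d _ _
  peiffer := by
    intro p q
    apply Subtype.ext
    apply Prod.ext
    · exact T.peiffer _ _
    · exact Q'.peiffer _ _

/-- First projection of the pullback. -/
def pbFst : XModHom (pbXMod α g) T where
  f1 := (MonoidHom.fst T.M Q'.M).comp (pbM α g).subtype
  f2 := (MonoidHom.fst T.G Q'.G).comp (pbG α g).subtype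
  comm_d := fun _ => rfl
  equiv := fun _ _ => rfl

/-- Second projection of the pullback. -/
def pbSnd : XModHom (pbXMod α g) Q' where
  f1 := (MonoidHom.snd T.M Q'.M).comp (pbM α g).subtype
  f2 := (MonoidHom.snd T.G Q'.G).comp (pbG α g).subtype
  comm_d := fun _ => rfl
  equiv := fun _ _ => rfl

end Pullback
section PullbackMaps

variable {N T Q Q' : XMod}

/-- The induced morphism from the kernel `N` into the pullback `T ×_Q Q'`. -/
def pbIn (κ : XModHom N T) (α : XModHom T Q) (g : XModHom Q' Q)
    (h : XModHom.comp α κ = XModHom.triv N Q) : XModHom N (pbXMod α g) where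
  f1 :=
    { toFun := fun n => ⟨(κ.f1 n, 1), by
        show α.f1 (κ.f1 n) = g.f1 1
        have := congrArg XModHom.f1 h
        have h' : α.f1 (κ.f1 n) = 1 := DFunLike.congr_fun this n
        rw [h', map_one]⟩
      map_one' := by
        apply Subtype.ext
        apply Prod.ext <;> simp <;> first | rfl | exact map_one _
      map_mul' := by
        intro a b
        apply Subtype.ext
        show (κ.f1 (a * b), (1 : Q'.M)) = (κ.f1 a, (1 : Q'.M)) * (κ.f1 b, (1 : Q'.M))
        simp [Prod.ext_iff, map_mul] }
  f2 :=
    { toFun := fun n => ⟨(κ.f2 n, 1), by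
        show α.f2 (κ.f2 n) = g.f2 1
        have := congrArg XModHom.f2 h
        have h' : α.f2 (κ.f2 n) = 1 := DFunLike.congr_fun this n
        rw [h', map_one]⟩
      map_one' := by
        apply Subtype.ext
        apply Prod.ext <;> simp <;> first | rfl | exact map_one _
      map_mul' := by
        intro a b
        apply Subtype.ext
        show (κ.f2 (a * b), (1 : Q'.G)) = (κ.f2 a, (1 : Q'.G)) * (κ.f2 b, (1 : Q'.G))
        simp [Prod.ext_iff, map_mul] }
  comm_d := by
    intro n
    apply Subtype.ext
    apply Prod.ext
    · exact κ.comm_d n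
    · show Q'.d (1 : Q'.M) = 1
      simp
  equiv := by
    intro b n
    apply Subtype.ext
    apply Prod.ext
    · exact κ.equiv b n
    · show (1 : Q'.M) = Q'.act 1 1
      simp

/-- The induced morphism into the pullback `T ×_Q Q'` from an object mapping
trivially to `Q` through the second leg. -/
def pbInR (α : XModHom T Q) (g : XModHom Q' Q) {X : XMod} (u : XModHom X Q')
    (h : XModHom.comp g u = XModHom.triv X Q) : XModHom X (pbXMod α g) where
  f1 :=
    { toFun := fun n => ⟨(1, u.f1 n), by
        show α.f1 1 = g.f1 (u.f1 n)
        have := congrArg XModHom.f1 h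
        have h' : g.f1 (u.f1 n) = 1 := DFunLike.congr_fun this n
        rw [h', map_one]⟩
      map_one' := by
        apply Subtype.ext
        apply Prod.ext <;> simp <;> first | rfl | exact map_one _
      map_mul' := by
        intro a b
        apply Subtype.ext
        show ((1 : T.M), u.f1 (a * b)) = ((1 : T.M), u.f1 a) * ((1 : T.M), u.f1 b)
        simp [Prod.ext_iff, map_mul] }
  f2 :=
    { toFun := fun n => ⟨(1, u.f2 n), by
        show α.f2 1 = g.f2 (u.f2 n)
        have := congrArg XModHom.f2 h
        have h' : g.f2 (u.f2 n) = 1 := DFunLike.congr_fun this n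
        rw [h', map_one]⟩
      map_one' := by
        apply Subtype.ext
        apply Prod.ext <;> simp <;> first | rfl | exact map_one _
      map_mul' := by
        intro a b
        apply Subtype.ext
        show ((1 : T.G), u.f2 (a * b)) = ((1 : T.G), u.f2 a) * ((1 : T.G), u.f2 b)
        simp [Prod.ext_iff, map_mul] }
  comm_d := by
    intro n
    apply Subtype.ext
    apply Prod.ext
    · show T.d (1 : T.M) = 1
      simp
    · exact u.comm_d n
  equiv := by
    intro b n
    apply Subtype.ext
    apply Prod.ext
    · show (1 : T.M) = T.act 1 1
      simp
    · exact u.equiv b n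

/-- The morphism of pullbacks `T ×_Q Q' → E ×_Q Q'` induced by `f : T → E`
with `p ∘ f = α`. -/
def pbMapL {E : XMod} (α : XModHom T Q) (p : XModHom E Q) (g : XModHom Q' Q)
    (f : XModHom T E) (hpf : XModHom.comp p f = α) :
    XModHom (pbXMod α g) (pbXMod p g) where
  f1 :=
    { toFun := fun w => ⟨(f.f1 w.1.1, w.1.2), by
        show p.f1 (f.f1 w.1.1) = g.f1 w.1.2
        have h' : p.f1 (f.f1 w.1.1) = α.f1 w.1.1 :=
          DFunLike.congr_fun (congrArg XModHom.f1 hpf) w.1.1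
        rw [h']
        exact w.2⟩
      map_one' := by
        apply Subtype.ext
        apply Prod.ext <;> simp <;> first | rfl | exact map_one _
      map_mul' := by
        intro a b
        apply Subtype.ext
        apply Prod.ext
        · exact map_mul f.f1 a.1.1 b.1.1
        · rfl }
  f2 :=
    { toFun := fun w => ⟨(f.f2 w.1.1, w.1.2), by
        show p.f2 (f.f2 w.1.1) = g.f2 w.1.2
        have h' : p.f2 (f.f2 w.1.1) = α.f2 w.1.1 :=
          DFunLike.congr_fun (congrArg XModHom.f2 hpf) w.1.1
        rw [h']
        exact w.2⟩
      map_one' := by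
        apply Subtype.ext
        apply Prod.ext <;> simp <;> first | rfl | exact map_one _
      map_mul' := by
        intro a b
        apply Subtype.ext
        apply Prod.ext
        · exact map_mul f.f2 a.1.1 b.1.1
        · rfl }
  comm_d := by
    intro w
    apply Subtype.ext
    apply Prod.ext
    · exact f.comm_d _
    · rfl
  equiv := by
    intro b w
    apply Subtype.ext
    apply Prod.ext
    · exact f.equiv _ _
    · rfl

end PullbackMaps

/-- A commuting square is a pullback square (categorical definition). -/
def IsPullbackSquare {P X Y Z : XMod} (p1 : XModHom P X) (p2 : XModHom P Y)
    (f : XModHom X Z) (h : XModHom Y Z) : Prop :=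
  XModHom.comp f p1 = XModHom.comp h p2 ∧
    ∀ (W : XMod) (u : XModHom W X) (v : XModHom W Y),
      XModHom.comp f u = XModHom.comp h v →
        ∃! w : XModHom W P, XModHom.comp p1 w = u ∧ XModHom.comp p2 w = v

namespace LocalizationFunctor

/-- `L` is admissible for the class of regular epimorphisms: applying `L` to the
pullback of a regular epimorphism `α : LT → LQ` along the coaugmentation
`ℓ^Q : Q → LQ` yields again a pullback square. -/
def Admissible (L : LocalizationFunctor) : Prop :=
  ∀ (T Q : XMod) (α : XModHom (L.obj T) (L.obj Q)), XModHom.RegEpi α →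
    IsPullbackSquare (L.map (pbFst α (L.ell Q))) (L.map (pbSnd α (L.ell Q)))
      (L.map α) (L.map (L.ell Q))

/-- `L` is conditionally flat: the pullback of any `L`-flat short exact sequence
along any morphism is again `L`-flat. -/
def ConditionallyFlat (L : LocalizationFunctor) : Prop :=
  ∀ (N T Q : XMod) (κ : XModHom N T) (α : XModHom T Q) (hse : ShortExact κ α),
    L.LFlat κ α →
      ∀ (Q' : XMod) (g : XModHom Q' Q),
        L.LFlat (pbIn κ α g hse.1.1) (pbSnd α g)

/-- A short exact sequence `1 → N → T → Q → 1` admits a fiberwise localization: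
there is a short exact sequence `1 → LN → E → Q → 1` together with an
`L`-equivalence `T → E` compatible with the coaugmentation of `N`. -/
def AdmitsFiberwise (L : LocalizationFunctor) {N T Q : XMod} (κ : XModHom N T)
    (α : XModHom T Q) : Prop :=
  ∃ (E : XMod) (j : XModHom (L.obj N) E) (p : XModHom E Q) (e : XModHom T E),
    ShortExact j p ∧ XModHom.IsIso (L.map e) ∧
      XModHom.comp e κ = XModHom.comp j (L.ell N) ∧ XModHom.comp p e = α

end LocalizationFunctor
section Kernel

variable {N T : XMod} (f : XModHom N T)

theorem ker_act_mem {b : N.G} (hb : b ∈ f.f2.ker) {n : N.M} (hn : n ∈ f.f1.ker) :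
    N.act b n ∈ f.f1.ker := by
  have hb' : f.f2 b = 1 := hb
  have hn' : f.f1 n = 1 := hn
  show f.f1 (N.act b n) = 1
  rw [f.equiv, hb', hn', map_one]

/-- The automorphism of `ker f.f1` induced by an element of `ker f.f2`. -/
def kerActEquiv (b : ↥f.f2.ker) : ↥f.f1.ker ≃* ↥f.f1.ker where
  toFun n := ⟨N.act b.1 n.1, ker_act_mem f b.2 n.2⟩
  invFun n := ⟨N.act b.1⁻¹ n.1, ker_act_mem f (f.f2.ker.inv_mem b.2) n.2⟩
  left_inv n := Subtype.ext (N.act_inv_act _ _)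
  right_inv n := Subtype.ext (N.act_act_inv _ _)
  map_mul' n m := Subtype.ext (map_mul _ _ _)

/-- The kernel of a morphism of crossed modules, computed componentwise. -/
def kerXMod : XMod where
  M := ↥f.f1.ker
  G := ↥f.f2.ker
  act :=
    { toFun := kerActEquiv f
      map_one' := by
        apply MulEquiv.ext
        intro n
        apply Subtype.ext
        show N.act (1 : ↥f.f2.ker).1 n.1 = n.1
        simp
      map_mul' := by
        intro b c
        apply MulEquiv.ext
        intro n
        apply Subtype.ext
        show N.act (b * c).1 n.1 = N.act b.1 (N.act c.1 n.1)
        simp [map_mul] }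
  d :=
    { toFun := fun n => ⟨N.d n.1, by
        have hn : f.f1 n.1 = 1 := n.2
        show f.f2 (N.d n.1) = 1
        rw [← f.comm_d, hn, map_one]⟩
      map_one' := by
        apply Subtype.ext
        simp
      map_mul' := by
        intro a b
        apply Subtype.ext
        show N.d (a * b).1 = N.d a.1 * N.d b.1
        simp }
  act_d := by
    intro b n
    apply Subtype.ext
    exact N.act_d _ _
  peiffer := by
    intro n m
    apply Subtype.ext
    exact N.peiffer _ _

/-- The inclusion of the kernel. -/
def kerIncl : XModHom (kerXMod f) N where
  f1 := f.f1.ker.subtype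
  f2 := f.f2.ker.subtype
  comm_d := fun _ => rfl
  equiv := fun _ _ => rfl

end Kernel

/-- A crossed module is trivial if both underlying groups are trivial. -/
def XMod.IsTrivial (X : XMod) : Prop :=
  (∀ m : X.M, m = 1) ∧ ∀ b : X.G, b = 1

/-- `X` is `A`-null if the only morphism of crossed modules `A → X` is the
trivial one. -/
def ANull (A X : XMod) : Prop :=
  ∀ φ : XModHom A X, φ = XModHom.triv A X

/-- `X` is `f`-local if precomposition with `f` is a bijection on morphisms
into `X`. -/
def FLocal {B C : XMod} (f : XModHom B C) (X : XMod) : Prop :=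
  Function.Bijective fun φ : XModHom C X => XModHom.comp φ f

/-- The subgroup `[N₂, N₁]` of `N₁` generated by the elements `ᵇt·t⁻¹`. -/
def actCommutator (N : XMod) : Subgroup N.M :=
  Subgroup.closure {x | ∃ (b : N.G) (t : N.M), x = N.act b t * t⁻¹}

section NormalClosure

variable {A W : XMod} (φ : XModHom A W)

/-- The level-2 part of the normal closure of the image of `φ`:
the normal closure of `φ₂(A₂)` in `W₂`. -/
def ncl2 : Subgroup W.G :=
  Subgroup.normalClosure (Set.range φ.f2)

/-- The level-1 part of the normal closure of the image of `φ`: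
the subgroup `φ₁(A₁)^{W₂}·[φ₂(A₂)^{W₂}, W₁]` of `W₁`. -/
def ncl1 : Subgroup W.M :=
  Subgroup.closure
    ({x | ∃ (b : W.G) (m : A.M), x = W.act b (φ.f1 m)} ∪
      {x | ∃ s ∈ ncl2 φ, ∃ w : W.M, x = W.act s w * w⁻¹})

end NormalClosure

/-! ### Auxiliary development for the main theorem -/

namespace XModHom

theorem cf_comp_assoc {A B C D : XMod} (f : XModHom A B) (g : XModHom B C) (h : XModHom C D) :
    comp (comp h g) f = comp h (comp g f) := rfl

theorem cf_comp_id {A B : XMod} (f : XModHom A B) : comp f (id A) = f := rfl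

theorem cf_id_comp {A B : XMod} (f : XModHom A B) : comp (id B) f = f := rfl

@[simp] theorem cf_comp_f1 {A B C : XMod} (g : XModHom B C) (f : XModHom A B) (x : A.M) :
    (comp g f).f1 x = g.f1 (f.f1 x) := rfl

@[simp] theorem cf_comp_f2 {A B C : XMod} (g : XModHom B C) (f : XModHom A B) (x : A.G) :
    (comp g f).f2 x = g.f2 (f.f2 x) := rfl

@[simp] theorem cf_triv_f1 {A B : XMod} (x : A.M) : (triv A B).f1 x = 1 := rfl
@[simp] theorem cf_triv_f2 {A B : XMod} (x : A.G) : (triv A B).f2 x = 1 := rfl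
@[simp] theorem cf_id_f1 {A : XMod} (x : A.M) : (id A).f1 x = x := rfl
@[simp] theorem cf_id_f2 {A : XMod} (x : A.G) : (id A).f2 x = x := rfl

theorem cf_ext' {N T : XMod} {f g : XModHom N T} (h1 : ∀ x, f.f1 x = g.f1 x)
    (h2 : ∀ x, f.f2 x = g.f2 x) : f = g :=
  ext (MonoidHom.ext h1) (MonoidHom.ext h2)

theorem cf_congr_f1 {N T : XMod} {f g : XModHom N T} (h : f = g) (x : N.M) :
    f.f1 x = g.f1 x := by rw [h]

theorem cf_congr_f2 {N T : XMod} {f g : XModHom N T} (h : f = g) (x : N.G) :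
    f.f2 x = g.f2 x := by rw [h]

theorem cf_comp_triv {A B C : XMod} (f : XModHom B C) :
    comp f (triv A B) = triv A C :=
  cf_ext' (fun x => by simp) (fun x => by simp)

theorem cf_triv_comp {A B C : XMod} (f : XModHom A B) :
    comp (triv B C) f = triv A C :=
  cf_ext' (fun x => rfl) (fun x => rfl)

theorem cf_isIso_id {A : XMod} : IsIso (id A) := ⟨id A, rfl, rfl⟩

theorem cf_isIso_comp {A B C : XMod} {g : XModHom B C} {f : XModHom A B}
    (hg : IsIso g) (hf : IsIso f) : IsIso (comp g f) := by
  obtain ⟨g', hg1, hg2⟩ := hg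
  obtain ⟨f', hf1, hf2⟩ := hf
  refine ⟨comp f' g', ?_, ?_⟩
  · calc comp (comp f' g') (comp g f) = comp f' (comp (comp g' g) f) := rfl
      _ = comp f' (comp (id B) f) := by rw [hg1]
      _ = id A := hf1
  · calc comp (comp g f) (comp f' g') = comp g (comp (comp f f') g') := rfl
      _ = comp g (comp (id B) g') := by rw [hf2]
      _ = id C := hg2

theorem cf_isIso_inv {A B : XMod} {f : XModHom A B} {g : XModHom B A}
    (h1 : comp g f = id A) (h2 : comp f g = id B) : IsIso g := ⟨f, h2, h1⟩

theorem cf_cancel_left {A B C : XMod} {e : XModHom B C} (he : IsIso e)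
    {x y : XModHom A B} (h : comp e x = comp e y) : x = y := by
  obtain ⟨e', he1, _⟩ := he
  calc x = comp (comp e' e) x := by rw [he1]; rfl
    _ = comp e' (comp e x) := rfl
    _ = comp e' (comp e y) := by rw [h]
    _ = comp (comp e' e) y := rfl
    _ = y := by rw [he1]; rfl

theorem cf_cancel_right {A B C : XMod} {e : XModHom A B} (he : IsIso e)
    {x y : XModHom B C} (h : comp x e = comp y e) : x = y := by
  obtain ⟨e', _, he2⟩ := he
  calc x = comp x (comp e e') := by rw [he2]; rfl
    _ = comp (comp x e) e' := rfl
    _ = comp (comp y e) e' := by rw [h]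
    _ = comp y (comp e e') := rfl
    _ = y := by rw [he2]; rfl

theorem cf_bijective_of_isIso {A B : XMod} {f : XModHom A B} (h : IsIso f) :
    Function.Bijective f.f1 ∧ Function.Bijective f.f2 := by
  obtain ⟨g, h1, h2⟩ := h
  constructor
  · exact ⟨Function.LeftInverse.injective (g := g.f1) (fun x => cf_congr_f1 h1 x),
      Function.RightInverse.surjective (g := g.f1) (fun x => cf_congr_f1 h2 x)⟩
  · exact ⟨Function.LeftInverse.injective (g := g.f2) (fun x => cf_congr_f2 h1 x),
      Function.RightInverse.surjective (g := g.f2) (fun x => cf_congr_f2 h2 x)⟩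

/-- A componentwise bijective morphism of crossed modules is an isomorphism. -/
theorem cf_isIso_of_bijective {A B : XMod} (f : XModHom A B)
    (h1 : Function.Bijective f.f1) (h2 : Function.Bijective f.f2) : IsIso f := by
  let e1 := MulEquiv.ofBijective f.f1 h1
  let e2 := MulEquiv.ofBijective f.f2 h2
  have he1 : ∀ x, f.f1 (e1.symm x) = x := fun x => e1.apply_symm_apply x
  have he2 : ∀ x, f.f2 (e2.symm x) = x := fun x => e2.apply_symm_apply x
  refine ⟨⟨e1.symm.toMonoidHom, e2.symm.toMonoidHom, ?_, ?_⟩, ?_, ?_⟩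
  · intro m
    apply h2.1
    show f.f2 (A.d (e1.symm m)) = f.f2 (e2.symm (B.d m))
    rw [← f.comm_d, he1, he2]
  · intro b m
    apply h1.1
    show f.f1 (e1.symm (B.act b m)) = f.f1 (A.act (e2.symm b) (e1.symm m))
    rw [he1, f.equiv, he1, he2]
  · exact cf_ext' (fun x => h1.1 (by simpa using he1 (f.f1 x)))
      (fun x => h2.1 (by simpa using he2 (f.f2 x)))
  · exact cf_ext' (fun x => he1 x) (fun x => he2 x)

/-- Componentwise injective morphisms are monomorphisms. -/
theorem cf_cancel_inj {A B C : XMod} {k : XModHom B C}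
    (hk1 : Function.Injective k.f1) (hk2 : Function.Injective k.f2)
    {x y : XModHom A B} (h : comp k x = comp k y) : x = y :=
  cf_ext' (fun a => hk1 (cf_congr_f1 h a)) (fun a => hk2 (cf_congr_f2 h a))

end XModHom
section KernelLemmas

open XModHom

/-- The concrete kernel inclusion is a categorical kernel. -/
theorem cf_kerIncl_isKernelOf {T Q : XMod} (α : XModHom T Q) :
    IsKernelOf (kerIncl α) α := by
  constructor
  · exact cf_ext' (fun x => x.2) (fun x => x.2)
  · intro X u hu
    have hu1 : ∀ x, α.f1 (u.f1 x) = 1 := fun x => cf_congr_f1 hu x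
    have hu2 : ∀ x, α.f2 (u.f2 x) = 1 := fun x => cf_congr_f2 hu x
    refine ⟨⟨{ toFun := fun x => ⟨u.f1 x, hu1 x⟩, map_one' := ?_, map_mul' := ?_ },
      { toFun := fun x => ⟨u.f2 x, hu2 x⟩, map_one' := ?_, map_mul' := ?_ }, ?_, ?_⟩, ?_, ?_⟩
    · exact Subtype.ext (map_one u.f1)
    · intro a b; exact Subtype.ext (map_mul u.f1 a b)
    · exact Subtype.ext (map_one u.f2)
    · intro a b; exact Subtype.ext (map_mul u.f2 a b)
    · intro n; exact Subtype.ext (u.comm_d n)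
    · intro b n; exact Subtype.ext (u.equiv b n)
    · exact cf_ext' (fun x => rfl) (fun x => rfl)
    · intro v hv
      exact cf_ext' (fun x => Subtype.ext (cf_congr_f1 hv x))
        (fun x => Subtype.ext (cf_congr_f2 hv x))

/-- Uniqueness of kernels: any categorical kernel is isomorphic to any other. -/
theorem cf_kernel_unique {N N' T Q : XMod} {κ : XModHom N T} {κ' : XModHom N' T}
    {α : XModHom T Q} (h : IsKernelOf κ α) (h' : IsKernelOf κ' α) :
    ∃ e : XModHom N' N, IsIso e ∧ comp κ e = κ' := by
  obtain ⟨v, hv, hvu⟩ := h.2 N' κ' h'.1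
  obtain ⟨w, hw, hwu⟩ := h'.2 N κ h.1
  refine ⟨v, ⟨w, ?_, ?_⟩, hv⟩
  · -- comp w v = id N'
    obtain ⟨z, hz, hzu⟩ := h'.2 N' κ' h'.1
    have e1 : comp κ' (comp w v) = κ' := by
      calc comp κ' (comp w v) = comp (comp κ' w) v := rfl
        _ = κ' := by rw [hw, hv]
    rw [hzu _ e1, hzu (id N') (cf_comp_id κ')]
  · obtain ⟨z, hz, hzu⟩ := h.2 N κ h.1
    have e1 : comp κ (comp v w) = κ := by
      calc comp κ (comp v w) = comp (comp κ v) w := rfl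
        _ = κ := by rw [hv, hw]
    rw [hzu _ e1, hzu (id N) (cf_comp_id κ)]

/-- Concrete exactness properties of a categorical kernel. -/
theorem cf_kernel_exact {N T Q : XMod} {κ : XModHom N T} {α : XModHom T Q}
    (h : IsKernelOf κ α) :
    Function.Injective κ.f1 ∧ Function.Injective κ.f2 ∧
      (∀ t : T.M, α.f1 t = 1 ↔ ∃ n, κ.f1 n = t) ∧
      (∀ t : T.G, α.f2 t = 1 ↔ ∃ n, κ.f2 n = t) := by
  obtain ⟨e, he, hee⟩ := cf_kernel_unique (cf_kerIncl_isKernelOf α) h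
  have hb := cf_bijective_of_isIso he
  have h1 : ∀ n, κ.f1 n = (e.f1 n).1 := fun n => (cf_congr_f1 hee n).symm
  have h2 : ∀ n, κ.f2 n = (e.f2 n).1 := fun n => (cf_congr_f2 hee n).symm
  refine ⟨?_, ?_, ?_, ?_⟩
  · intro a b hab
    exact hb.1.1 (Subtype.ext (by rw [← h1, ← h1, hab]))
  · intro a b hab
    exact hb.2.1 (Subtype.ext (by rw [← h2, ← h2, hab]))
  · intro t
    constructor
    · intro ht
      obtain ⟨n, hn⟩ := hb.1.2 ⟨t, ht⟩
      exact ⟨n, by rw [h1, hn]⟩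
    · rintro ⟨n, rfl⟩
      rw [h1]; exact (e.f1 n).2
  · intro t
    constructor
    · intro ht
      obtain ⟨n, hn⟩ := hb.2.2 ⟨t, ht⟩
      exact ⟨n, by rw [h2, hn]⟩
    · rintro ⟨n, rfl⟩
      rw [h2]; exact (e.f2 n).2

/-- Transport of kernels along isomorphisms. -/
theorem cf_kernel_transport {N T Q N₂ T₂ Q₂ : XMod} {κ : XModHom N T} {α : XModHom T Q}
    (h : IsKernelOf κ α) {a : XModHom N₂ N} {b : XModHom T₂ T} {c : XModHom Q₂ Q}
    (ha : IsIso a) (hb : IsIso b) (hc : IsIso c)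
    {κ₂ : XModHom N₂ T₂} {α₂ : XModHom T₂ Q₂}
    (hκ : comp κ a = comp b κ₂) (hα : comp α b = comp c α₂) :
    IsKernelOf κ₂ α₂ := by
  obtain ⟨a', ha1, ha2⟩ := ha
  obtain ⟨b', hb1, hb2⟩ := hb
  constructor
  · apply cf_cancel_left (e := c) hc
    rw [cf_comp_triv]
    calc comp c (comp α₂ κ₂) = comp (comp c α₂) κ₂ := rfl
      _ = comp α (comp b κ₂) := by rw [← hα]; rfl
      _ = comp α (comp κ a) := by rw [← hκ]
      _ = comp (comp α κ) a := rfl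
      _ = triv N₂ Q := by rw [h.1, cf_triv_comp]
  · intro X u hu
    have hu' : comp α (comp b u) = triv X Q := by
      calc comp α (comp b u) = comp (comp α b) u := rfl
        _ = comp c (comp α₂ u) := by rw [hα]; rfl
        _ = triv X Q := by rw [hu, cf_comp_triv]
    obtain ⟨v, hv, hvu⟩ := h.2 X (comp b u) hu'
    refine ⟨comp a' v, ?_, ?_⟩
    · apply cf_cancel_left (e := b) ⟨b', hb1, hb2⟩
      calc comp b (comp κ₂ (comp a' v)) = comp (comp (comp b κ₂) a') v := rfl
        _ = comp (comp (comp κ a) a') v := by rw [hκ]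
        _ = comp (comp κ (comp a a')) v := rfl
        _ = comp κ v := by rw [ha2]; rfl
        _ = comp b u := hv
    · intro y hy
      have : comp κ (comp a y) = comp b u := by
        calc comp κ (comp a y) = comp (comp κ a) y := rfl
          _ = comp b (comp κ₂ y) := by rw [hκ]; rfl
          _ = comp b u := by rw [hy]
      have := hvu _ this
      calc y = comp (comp a' a) y := by rw [ha1]; rfl
        _ = comp a' (comp a y) := rfl
        _ = comp a' v := by rw [this]

end KernelLemmas
section PullbackLemmas

open XModHom

variable {T Q Q' : XMod} (α : XModHom T Q) (g : XModHom Q' Q)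

theorem cf_pb_comm : comp α (pbFst α g) = comp g (pbSnd α g) :=
  cf_ext' (fun w => w.2) (fun w => w.2)

/-- The lift into the concrete pullback. -/
def cf_pbLift {W : XMod} (u : XModHom W T) (v : XModHom W Q')
    (hc : comp α u = comp g v) : XModHom W (pbXMod α g) where
  f1 :=
    { toFun := fun x => ⟨(u.f1 x, v.f1 x), cf_congr_f1 hc x⟩
      map_one' := Subtype.ext (Prod.ext (map_one u.f1) (map_one v.f1))
      map_mul' := fun a b => Subtype.ext (Prod.ext (map_mul u.f1 a b) (map_mul v.f1 a b)) }
  f2 :=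
    { toFun := fun x => ⟨(u.f2 x, v.f2 x), cf_congr_f2 hc x⟩
      map_one' := Subtype.ext (Prod.ext (map_one u.f2) (map_one v.f2))
      map_mul' := fun a b => Subtype.ext (Prod.ext (map_mul u.f2 a b) (map_mul v.f2 a b)) }
  comm_d := fun n => Subtype.ext (Prod.ext (u.comm_d n) (v.comm_d n))
  equiv := fun b n => Subtype.ext (Prod.ext (u.equiv b n) (v.equiv b n))

theorem cf_pbFst_pbLift {W : XMod} (u : XModHom W T) (v : XModHom W Q')
    (hc : comp α u = comp g v) : comp (pbFst α g) (cf_pbLift α g u v hc) = u :=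
  cf_ext' (fun _ => rfl) (fun _ => rfl)

theorem cf_pbSnd_pbLift {W : XMod} (u : XModHom W T) (v : XModHom W Q')
    (hc : comp α u = comp g v) : comp (pbSnd α g) (cf_pbLift α g u v hc) = v :=
  cf_ext' (fun _ => rfl) (fun _ => rfl)

/-- The concrete pullback is a categorical pullback. -/
theorem cf_pb_isPullback : IsPullbackSquare (pbFst α g) (pbSnd α g) α g := by
  refine ⟨cf_pb_comm α g, ?_⟩
  intro W u v hc
  refine ⟨cf_pbLift α g u v hc, ⟨cf_pbFst_pbLift α g u v hc, cf_pbSnd_pbLift α g u v hc⟩, ?_⟩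
  rintro w ⟨h1, h2⟩
  refine cf_ext' (fun x => Subtype.ext (Prod.ext ?_ ?_)) (fun x => Subtype.ext (Prod.ext ?_ ?_))
  · exact cf_congr_f1 h1 x
  · exact cf_congr_f1 h2 x
  · exact cf_congr_f2 h1 x
  · exact cf_congr_f2 h2 x

theorem cf_pbFst_pbIn {N : XMod} (κ : XModHom N T) (h : comp α κ = triv N Q) :
    comp (pbFst α g) (pbIn κ α g h) = κ :=
  cf_ext' (fun _ => rfl) (fun _ => rfl)

theorem cf_pbSnd_pbIn {N : XMod} (κ : XModHom N T) (h : comp α κ = triv N Q) :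
    comp (pbSnd α g) (pbIn κ α g h) = triv N Q' :=
  cf_ext' (fun _ => rfl) (fun _ => rfl)

theorem cf_pbSnd_regEpi (hα : RegEpi α) : RegEpi (pbSnd α g) := by
  constructor
  · intro q
    obtain ⟨t, ht⟩ := hα.1 (g.f1 q)
    exact ⟨⟨(t, q), ht⟩, rfl⟩
  · intro q
    obtain ⟨t, ht⟩ := hα.2 (g.f2 q)
    exact ⟨⟨(t, q), ht⟩, rfl⟩

/-- The induced map `pbIn` is a kernel of the second projection. -/
theorem cf_pbIn_isKernelOf {N : XMod} (κ : XModHom N T) (hκ : IsKernelOf κ α)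
    (h : comp α κ = triv N Q) : IsKernelOf (pbIn κ α g h) (pbSnd α g) := by
  refine ⟨cf_pbSnd_pbIn α g κ h, ?_⟩
  intro X u hu
  have hu1 : ∀ x, (u.f1 x).1.2 = 1 := fun x => cf_congr_f1 hu x
  have hu2 : ∀ x, (u.f2 x).1.2 = 1 := fun x => cf_congr_f2 hu x
  have hc : comp α (comp (pbFst α g) u) = triv X Q := by
    refine cf_ext' (fun x => ?_) (fun x => ?_)
    · show α.f1 (u.f1 x).1.1 = 1
      rw [(u.f1 x).2, hu1, map_one]
    · show α.f2 (u.f2 x).1.1 = 1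
      rw [(u.f2 x).2, hu2, map_one]
  obtain ⟨v, hv, hvu⟩ := hκ.2 X (comp (pbFst α g) u) hc
  refine ⟨v, ?_, ?_⟩
  · refine cf_ext' (fun x => Subtype.ext (Prod.ext ?_ ?_)) (fun x => Subtype.ext (Prod.ext ?_ ?_))
    · exact cf_congr_f1 hv x
    · exact (hu1 x).symm
    · exact cf_congr_f2 hv x
    · exact (hu2 x).symm
  · intro y hy
    apply hvu
    rw [← hy]
    exact cf_ext' (fun _ => rfl) (fun _ => rfl)

end PullbackLemmas

section PullbackSquareTransport

open XModHom

/-- Transport of pullback squares along an isomorphism at the pullback corner. -/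
theorem cf_pbsq_precomp {P₀ P X Y Z : XMod} {p1 : XModHom P X} {p2 : XModHom P Y}
    {f : XModHom X Z} {h : XModHom Y Z} (hsq : IsPullbackSquare p1 p2 f h)
    {e : XModHom P₀ P} (he : IsIso e) :
    IsPullbackSquare (comp p1 e) (comp p2 e) f h := by
  obtain ⟨e', he1, he2⟩ := he
  constructor
  · calc comp f (comp p1 e) = comp (comp f p1) e := rfl
      _ = comp (comp h p2) e := by rw [hsq.1]
      _ = comp h (comp p2 e) := rfl
  · intro W u v hc
    obtain ⟨w, ⟨hw1, hw2⟩, hwu⟩ := hsq.2 W u v hc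
    refine ⟨comp e' w, ⟨?_, ?_⟩, ?_⟩
    · calc comp (comp p1 e) (comp e' w) = comp p1 (comp (comp e e') w) := rfl
        _ = comp p1 w := by rw [he2]; rfl
        _ = u := hw1
    · calc comp (comp p2 e) (comp e' w) = comp p2 (comp (comp e e') w) := rfl
        _ = comp p2 w := by rw [he2]; rfl
        _ = v := hw2
    · intro y hy
      have : comp e y = w := by
        apply hwu
        exact ⟨hy.1, hy.2⟩
      rw [← this]
      calc y = comp (comp e' e) y := by rw [he1]; rfl
        _ = comp e' (comp e y) := rfl

/-- Transport of pullback squares along an isomorphism at the `X` corner. -/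
theorem cf_pbsq_corner {P X X₀ Y Z : XMod} {p1 : XModHom P X} {p2 : XModHom P Y}
    {f : XModHom X₀ Z} {h : XModHom Y Z} {e : XModHom X X₀} (he : IsIso e)
    (hsq : IsPullbackSquare (comp e p1) p2 f h) :
    IsPullbackSquare p1 p2 (comp f e) h := by
  constructor
  · calc comp (comp f e) p1 = comp f (comp e p1) := rfl
      _ = comp h p2 := hsq.1
  · intro W u v hc
    have hc' : comp f (comp e u) = comp h v := by
      calc comp f (comp e u) = comp (comp f e) u := rfl
        _ = comp h v := hc
    obtain ⟨w, ⟨hw1, hw2⟩, hwu⟩ := hsq.2 W (comp e u) v hc'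
    refine ⟨w, ⟨?_, hw2⟩, ?_⟩
    · apply cf_cancel_left he
      calc comp e (comp p1 w) = comp (comp e p1) w := rfl
        _ = comp e u := hw1
    · intro y hy
      apply hwu
      refine ⟨?_, hy.2⟩
      calc comp (comp e p1) y = comp e (comp p1 y) := rfl
        _ = comp e u := by rw [hy.1]

/-- The kernel of a pullback projection is induced by the kernel of the
opposite side. -/
theorem cf_pbsq_kernel {P X Y Z K : XMod} {p1 : XModHom P X} {p2 : XModHom P Y}
    {f : XModHom X Z} {h : XModHom Y Z} (hsq : IsPullbackSquare p1 p2 f h)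
    {k : XModHom K X} (hk : IsKernelOf k f) {kt : XModHom K P}
    (h1 : comp p1 kt = k) (h2 : comp p2 kt = triv K Y) : IsKernelOf kt p2 := by
  refine ⟨h2, ?_⟩
  intro W u hu
  have hc : comp f (comp p1 u) = triv W Z := by
    calc comp f (comp p1 u) = comp (comp f p1) u := rfl
      _ = comp (comp h p2) u := by rw [hsq.1]
      _ = comp h (comp p2 u) := rfl
      _ = comp h (triv W Y) := by rw [hu]
      _ = triv W Z := cf_comp_triv h
  obtain ⟨v, hv, hvu⟩ := hk.2 W (comp p1 u) hc
  have hcomm : comp f (comp p1 u) = comp h (comp p2 u) := by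
    calc comp f (comp p1 u) = comp (comp f p1) u := rfl
      _ = comp (comp h p2) u := by rw [hsq.1]
      _ = comp h (comp p2 u) := rfl
  obtain ⟨w, ⟨hw1, hw2⟩, hwu⟩ := hsq.2 W (comp p1 u) (comp p2 u) hcomm
  have hu' : u = w := hwu u ⟨rfl, rfl⟩
  have hkv : comp kt v = w := by
    apply hwu
    constructor
    · calc comp p1 (comp kt v) = comp (comp p1 kt) v := rfl
        _ = comp k v := by rw [h1]
        _ = comp p1 u := hv
    · calc comp p2 (comp kt v) = comp (comp p2 kt) v := rfl
        _ = comp (triv K Y) v := by rw [h2]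
        _ = triv W Y := cf_triv_comp v
        _ = comp p2 u := by rw [hu]
  refine ⟨v, hkv.trans hu'.symm, ?_⟩
  intro y hy
  apply hvu
  calc comp k y = comp (comp p1 kt) y := by rw [h1]
    _ = comp p1 (comp kt y) := rfl
    _ = comp p1 u := by rw [hy]

end PullbackSquareTransport
section LocalizationLemmas

open XModHom

/-- The trivial crossed module. -/
def cfUnitXMod : XMod where
  M := PUnit
  G := PUnit
  act := 1
  d := 1
  act_d := fun _ _ => rfl
  peiffer := fun _ _ => rfl

def cfToUnit (A : XMod) : XModHom A cfUnitXMod :=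
  ⟨1, 1, fun _ => rfl, fun _ _ => rfl⟩

def cfFromUnit (B : XMod) : XModHom cfUnitXMod B :=
  ⟨1, 1, fun _ => by simp, fun _ _ => by simp⟩

variable (L : LocalizationFunctor)

theorem cf_map_triv (hL : L.RegEpiLoc) (A B : XMod) :
    L.map (triv A B) = triv (L.obj A) (L.obj B) := by
  have h : triv A B = comp (cfFromUnit B) (cfToUnit A) :=
    cf_ext' (fun _ => rfl) (fun _ => rfl)
  have hM : ∀ x : (L.obj cfUnitXMod).M, x = 1 := by
    intro x
    obtain ⟨p, hp⟩ := (hL cfUnitXMod).1 x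
    rw [← hp, show p = 1 from rfl, map_one]
  have hG : ∀ x : (L.obj cfUnitXMod).G, x = 1 := by
    intro x
    obtain ⟨p, hp⟩ := (hL cfUnitXMod).2 x
    rw [← hp, show p = 1 from rfl, map_one]
  rw [h, L.map_comp]
  refine cf_ext' (fun x => ?_) (fun x => ?_)
  · show (L.map (cfFromUnit B)).f1 ((L.map (cfToUnit A)).f1 x) = 1
    rw [hM ((L.map (cfToUnit A)).f1 x), map_one]
  · show (L.map (cfFromUnit B)).f2 ((L.map (cfToUnit A)).f2 x) = 1
    rw [hG ((L.map (cfToUnit A)).f2 x), map_one]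

theorem cf_map_isIso {A B : XMod} {f : XModHom A B} (h : IsIso f) :
    IsIso (L.map f) := by
  obtain ⟨g, h1, h2⟩ := h
  exact ⟨L.map g, by rw [← L.map_comp, h1, L.map_id], by rw [← L.map_comp, h2, L.map_id]⟩

theorem cf_map_regEpi (hL : L.RegEpiLoc) {A B : XMod} {f : XModHom A B} (h : RegEpi f) :
    RegEpi (L.map f) := by
  have hn := L.natural f
  constructor
  · intro y
    obtain ⟨b, hb⟩ := (hL B).1 y
    obtain ⟨a, ha⟩ := h.1 b
    exact ⟨(L.ell A).f1 a, by
      have := cf_congr_f1 hn a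
      simp only [cf_comp_f1] at this
      rw [← this, ha, hb]⟩
  · intro y
    obtain ⟨b, hb⟩ := (hL B).2 y
    obtain ⟨a, ha⟩ := h.2 b
    exact ⟨(L.ell A).f2 a, by
      have := cf_congr_f2 hn a
      simp only [cf_comp_f2] at this
      rw [← this, ha, hb]⟩

/-- An endomorphism of a localized object commuting with the coaugmentation is
the identity. -/
theorem cf_ell_cancel {K : XMod} {ψ : XModHom (L.obj K) (L.obj K)}
    (h : comp ψ (L.ell K) = L.ell K) : ψ = XModHom.id (L.obj K) := by
  have h1 : comp (L.map ψ) (L.map (L.ell K)) = comp (XModHom.id (L.obj (L.obj K))) (L.map (L.ell K)) := by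
    rw [← L.map_comp, h, cf_id_comp]
  have h2 : L.map ψ = XModHom.id (L.obj (L.obj K)) := cf_cancel_right (L.iso_map_ell K) h1
  have h3 := L.natural ψ
  rw [h2, cf_id_comp] at h3
  exact cf_cancel_left (L.iso_ell_obj K) (by rw [h3, cf_comp_id])

/-- The pullback of local crossed modules is local. -/
theorem cf_local_pb {X Y Z : XMod} (hX : IsIso (L.ell X)) (hY : IsIso (L.ell Y))
    (hZ : IsIso (L.ell Z)) (f : XModHom X Z) (h : XModHom Y Z) :
    IsIso (L.ell (pbXMod f h)) := by
  obtain ⟨gX, hgX1, hgX2⟩ := hX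
  obtain ⟨gY, hgY1, hgY2⟩ := hY
  obtain ⟨gZ, hgZ1, hgZ2⟩ := hZ
  set W := pbXMod f h
  have hfg : comp f gX = comp gZ (L.map f) := by
    apply cf_cancel_right (⟨gX, hgX1, hgX2⟩ : IsIso (L.ell X)) (C := Z)
    calc comp (comp f gX) (L.ell X) = comp f (comp gX (L.ell X)) := rfl
      _ = f := by rw [hgX1]; rfl
      _ = comp gZ (comp (L.ell Z) f) := by rw [← cf_comp_assoc, hgZ1]; rfl
      _ = comp gZ (comp (L.map f) (L.ell X)) := by rw [L.natural f]
      _ = comp (comp gZ (L.map f)) (L.ell X) := rfl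
  have hhg : comp h gY = comp gZ (L.map h) := by
    apply cf_cancel_right (⟨gY, hgY1, hgY2⟩ : IsIso (L.ell Y)) (C := Z)
    calc comp (comp h gY) (L.ell Y) = comp h (comp gY (L.ell Y)) := rfl
      _ = h := by rw [hgY1]; rfl
      _ = comp gZ (comp (L.ell Z) h) := by rw [← cf_comp_assoc, hgZ1]; rfl
      _ = comp gZ (comp (L.map h) (L.ell Y)) := by rw [L.natural h]
      _ = comp (comp gZ (L.map h)) (L.ell Y) := rfl
  set u1 : XModHom (L.obj W) X := comp gX (L.map (pbFst f h)) with hu1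
  set u2 : XModHom (L.obj W) Y := comp gY (L.map (pbSnd f h)) with hu2
  have hc : comp f u1 = comp h u2 := by
    calc comp f u1 = comp (comp f gX) (L.map (pbFst f h)) := rfl
      _ = comp gZ (comp (L.map f) (L.map (pbFst f h))) := by rw [hfg]; rfl
      _ = comp gZ (L.map (comp f (pbFst f h))) := by rw [← L.map_comp]
      _ = comp gZ (L.map (comp h (pbSnd f h))) := by rw [cf_pb_comm]
      _ = comp gZ (comp (L.map h) (L.map (pbSnd f h))) := by rw [L.map_comp]
      _ = comp (comp h gY) (L.map (pbSnd f h)) := by rw [hhg]; rfl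
      _ = comp h u2 := rfl
  set v : XModHom (L.obj W) W := cf_pbLift f h u1 u2 hc with hv
  have hv1 : comp (pbFst f h) v = u1 := cf_pbFst_pbLift f h u1 u2 hc
  have hv2 : comp (pbSnd f h) v = u2 := cf_pbSnd_pbLift f h u1 u2 hc
  have hvl : comp v (L.ell W) = XModHom.id W := by
    obtain ⟨w, hw, hwu⟩ := (cf_pb_isPullback f h).2 W (pbFst f h) (pbSnd f h) (cf_pb_comm f h)
    have e1 : comp v (L.ell W) = w := by
      apply hwu
      constructor
      · calc comp (pbFst f h) (comp v (L.ell W)) = comp (comp (pbFst f h) v) (L.ell W) := rfl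
          _ = comp (comp gX (L.map (pbFst f h))) (L.ell W) := by rw [hv1]
          _ = comp gX (comp (L.map (pbFst f h)) (L.ell W)) := rfl
          _ = comp gX (comp (L.ell X) (pbFst f h)) := by rw [← L.natural]
          _ = comp (comp gX (L.ell X)) (pbFst f h) := rfl
          _ = pbFst f h := by rw [hgX1]; rfl
      · calc comp (pbSnd f h) (comp v (L.ell W)) = comp (comp (pbSnd f h) v) (L.ell W) := rfl
          _ = comp (comp gY (L.map (pbSnd f h))) (L.ell W) := by rw [hv2]
          _ = comp gY (comp (L.map (pbSnd f h)) (L.ell W)) := rfl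
          _ = comp gY (comp (L.ell Y) (pbSnd f h)) := by rw [← L.natural]
          _ = comp (comp gY (L.ell Y)) (pbSnd f h) := rfl
          _ = pbSnd f h := by rw [hgY1]; rfl
    have e2 : XModHom.id W = w := by
      apply hwu
      exact ⟨cf_comp_id _, cf_comp_id _⟩
    rw [e1, ← e2]
  have hlv : comp (L.ell W) v = XModHom.id (L.obj W) := by
    apply cf_ell_cancel L
    calc comp (comp (L.ell W) v) (L.ell W) = comp (L.ell W) (comp v (L.ell W)) := rfl
      _ = L.ell W := by rw [hvl]; rfl
  exact ⟨v, hvl, hlv⟩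

/-- The kernel of a morphism between local crossed modules is local. -/
theorem cf_local_ker (hL : L.RegEpiLoc) {X Y : XMod} (hX : IsIso (L.ell X)) (hY : IsIso (L.ell Y))
    (α : XModHom X Y) : IsIso (L.ell (kerXMod α)) := by
  obtain ⟨gX, hgX1, hgX2⟩ := hX
  obtain ⟨gY, hgY1, hgY2⟩ := hY
  set K := kerXMod α
  set κ := kerIncl α with hκ
  have hker := cf_kerIncl_isKernelOf α
  have hαg : comp α gX = comp gY (L.map α) := by
    apply cf_cancel_right (⟨gX, hgX1, hgX2⟩ : IsIso (L.ell X)) (C := Y)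
    calc comp (comp α gX) (L.ell X) = comp α (comp gX (L.ell X)) := rfl
      _ = α := by rw [hgX1]; rfl
      _ = comp gY (comp (L.ell Y) α) := by rw [← cf_comp_assoc, hgY1]; rfl
      _ = comp gY (comp (L.map α) (L.ell X)) := by rw [L.natural α]
      _ = comp (comp gY (L.map α)) (L.ell X) := rfl
  set u : XModHom (L.obj K) X := comp gX (L.map κ) with hu
  have hαu : comp α u = triv (L.obj K) Y := by
    calc comp α u = comp (comp α gX) (L.map κ) := rfl
      _ = comp gY (comp (L.map α) (L.map κ)) := by rw [hαg]; rfl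
      _ = comp gY (L.map (comp α κ)) := by rw [← L.map_comp]
      _ = comp gY (L.map (triv K Y)) := by rw [hker.1]
      _ = comp gY (triv (L.obj K) (L.obj Y)) := by rw [cf_map_triv L hL]
      _ = triv (L.obj K) Y := cf_comp_triv gY
  obtain ⟨v, hv, hvu⟩ := hker.2 (L.obj K) u hαu
  have hvl : comp v (L.ell K) = XModHom.id K := by
    apply cf_cancel_inj (k := κ) Subtype.coe_injective Subtype.coe_injective
    calc comp κ (comp v (L.ell K)) = comp (comp κ v) (L.ell K) := rfl
      _ = comp (comp gX (L.map κ)) (L.ell K) := by rw [hv]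
      _ = comp gX (comp (L.map κ) (L.ell K)) := rfl
      _ = comp gX (comp (L.ell X) κ) := by rw [← L.natural]
      _ = comp (comp gX (L.ell X)) κ := rfl
      _ = κ := by rw [hgX1]; rfl
      _ = comp κ (XModHom.id K) := rfl
  have hlv : comp (L.ell K) v = XModHom.id (L.obj K) := by
    apply cf_ell_cancel L
    calc comp (comp (L.ell K) v) (L.ell K) = comp (L.ell K) (comp v (L.ell K)) := rfl
      _ = L.ell K := by rw [hvl]; rfl
  exact ⟨v, hvl, hlv⟩

end LocalizationLemmas
section MainLemmas

open XModHom

theorem cf_regEpi_comp {A B C : XMod} {g : XModHom B C} {f : XModHom A B}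
    (hg : RegEpi g) (hf : RegEpi f) : RegEpi (comp g f) :=
  ⟨hg.1.comp hf.1, hg.2.comp hf.2⟩

theorem cf_regEpi_of_isIso {A B : XMod} {f : XModHom A B} (h : IsIso f) : RegEpi f :=
  ⟨(cf_bijective_of_isIso h).1.2, (cf_bijective_of_isIso h).2.2⟩

/-- Factorization of a group homomorphism through a surjection killing its kernel. -/
theorem cf_factor {A B C : Type} [Group A] [Group B] [Group C] (s : A →* B) (f : A →* C)
    (hs : Function.Surjective s) (hker : ∀ a, s a = 1 → f a = 1) :
    ∃ φ : B →* C, ∀ a, φ (s a) = f a := by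
  have key : ∀ a b, s a = s b → f a = f b := by
    intro a b hab
    have h1 : f (a * b⁻¹) = 1 := hker _ (by rw [map_mul, map_inv, hab, mul_inv_cancel])
    rw [map_mul, map_inv] at h1
    exact mul_inv_eq_one.mp h1
  have h_eq : ∀ b, s (Function.surjInv hs b) = b := Function.surjInv_eq hs
  refine ⟨{ toFun := fun b => f (Function.surjInv hs b), map_one' := ?_, map_mul' := ?_ }, ?_⟩
  · show f (Function.surjInv hs 1) = 1
    rw [key _ 1 (by rw [h_eq, map_one]), map_one]
  · intro x y
    show f (Function.surjInv hs (x * y)) = f (Function.surjInv hs x) * f (Function.surjInv hs y)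
    rw [key (Function.surjInv hs (x * y)) (Function.surjInv hs x * Function.surjInv hs y)
      (by rw [h_eq, map_mul, h_eq, h_eq]), map_mul]
  · intro a
    exact key _ a (h_eq (s a))

/-- **Main consequence of admissibility**: the pullback along the coaugmentation
of a short exact sequence of local objects over `L.obj Q''` is `L`-flat. -/
theorem cf_main_flat (L : LocalizationFunctor) (hL : L.RegEpiLoc) (hAdm : L.Admissible)
    {NN X Q'' : XMod} (hX : IsIso (L.ell X)) (hNN : IsIso (L.ell NN))
    (β : XModHom X (L.obj Q'')) (hβ : RegEpi β)
    (κβ : XModHom NN X) (hker : IsKernelOf κβ β) (htriv : comp β κβ = triv NN (L.obj Q'')) :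
    ShortExact (L.map (pbIn κβ β (L.ell Q'') htriv)) (L.map (pbSnd β (L.ell Q''))) := by
  obtain ⟨wX, hwX1, hwX2⟩ := hX
  obtain ⟨wN, hwN1, hwN2⟩ := hNN
  obtain ⟨wQ, hwQ1, hwQ2⟩ := L.iso_ell_obj Q''
  set ℓ := L.ell Q''
  set α' : XModHom (L.obj X) (L.obj Q'') := comp β wX with hα'def
  have hα' : RegEpi α' := cf_regEpi_comp hβ (cf_regEpi_of_isIso ⟨L.ell X, hwX2, hwX1⟩)
  have hsq0 := hAdm X Q'' α' hα'
  have hpf : comp α' (L.ell X) = β := by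
    rw [hα'def, cf_comp_assoc, hwX1]
    rfl
  set j : XModHom (pbXMod β ℓ) (pbXMod α' ℓ) := pbMapL β α' ℓ (L.ell X) hpf with hj
  set j' : XModHom (pbXMod α' ℓ) (pbXMod β ℓ) := pbMapL α' β ℓ wX rfl with hj'
  have hjiso : IsIso j := by
    refine ⟨j', ?_, ?_⟩
    · exact cf_ext' (fun x => Subtype.ext (Prod.ext (cf_congr_f1 hwX1 x.1.1) rfl))
        (fun x => Subtype.ext (Prod.ext (cf_congr_f2 hwX1 x.1.1) rfl))
    · exact cf_ext' (fun x => Subtype.ext (Prod.ext (cf_congr_f1 hwX2 x.1.1) rfl))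
        (fun x => Subtype.ext (Prod.ext (cf_congr_f2 hwX2 x.1.1) rfl))
  have hsq1 := cf_pbsq_precomp hsq0 (cf_map_isIso L hjiso)
  have e1 : comp (L.map (pbFst α' ℓ)) (L.map j) =
      comp (L.map (L.ell X)) (L.map (pbFst β ℓ)) := by
    rw [← L.map_comp, ← L.map_comp]
    congr 1
    try exact cf_ext' (fun _ => rfl) (fun _ => rfl)
  have e2 : comp (L.map (pbSnd α' ℓ)) (L.map j) = L.map (pbSnd β ℓ) := by
    rw [← L.map_comp]
    congr 1
    try exact cf_ext' (fun _ => rfl) (fun _ => rfl)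
  rw [e1, e2] at hsq1
  have hsq2 := cf_pbsq_corner (L.iso_map_ell X) hsq1
  have e3 : comp (L.map α') (L.map (L.ell X)) = L.map β := by
    rw [← L.map_comp, hpf]
  rw [e3] at hsq2
  -- `hsq2 : IsPullbackSquare (L.map (pbFst β ℓ)) (L.map (pbSnd β ℓ)) (L.map β) (L.map ℓ)`
  have hκβ : comp κβ wN = comp wX (L.map κβ) := by
    apply cf_cancel_right (⟨wN, hwN1, hwN2⟩ : IsIso (L.ell NN))
    calc comp (comp κβ wN) (L.ell NN) = comp κβ (comp wN (L.ell NN)) := rfl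
      _ = κβ := by rw [hwN1]; try rfl
      _ = comp (comp wX (L.ell X)) κβ := by rw [hwX1]; try rfl
      _ = comp wX (comp (L.ell X) κβ) := rfl
      _ = comp wX (comp (L.map κβ) (L.ell NN)) := by rw [L.natural κβ]
      _ = comp (comp wX (L.map κβ)) (L.ell NN) := rfl
  have hβw : comp β wX = comp wQ (L.map β) := by
    apply cf_cancel_right (⟨wX, hwX1, hwX2⟩ : IsIso (L.ell X))
    calc comp (comp β wX) (L.ell X) = comp β (comp wX (L.ell X)) := rfl
      _ = β := by rw [hwX1]; try rfl
      _ = comp (comp wQ (L.ell (L.obj Q''))) β := by rw [hwQ1]; try rfl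
      _ = comp wQ (comp (L.ell (L.obj Q'')) β) := rfl
      _ = comp wQ (comp (L.map β) (L.ell X)) := by rw [L.natural β]
      _ = comp (comp wQ (L.map β)) (L.ell X) := rfl
  have hkerL : IsKernelOf (L.map κβ) (L.map β) :=
    cf_kernel_transport hker (⟨L.ell NN, hwN2, hwN1⟩ : IsIso wN)
      (⟨L.ell X, hwX2, hwX1⟩ : IsIso wX)
      (⟨L.ell (L.obj Q''), hwQ2, hwQ1⟩ : IsIso wQ) hκβ hβw
  have h1 : comp (L.map (pbFst β ℓ)) (L.map (pbIn κβ β ℓ htriv)) = L.map κβ := by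
    rw [← L.map_comp, cf_pbFst_pbIn]
  have h2 : comp (L.map (pbSnd β ℓ)) (L.map (pbIn κβ β ℓ htriv)) =
      triv (L.obj NN) (L.obj Q'') := by
    rw [← L.map_comp, cf_pbSnd_pbIn, cf_map_triv L hL]
  exact ⟨cf_pbsq_kernel hsq2 hkerL h1 h2, cf_map_regEpi L hL (cf_pbSnd_regEpi β ℓ hβ)⟩

end MainLemmas
section Directions

open XModHom

theorem cf_cf_to_adm (L : LocalizationFunctor) (hL : L.RegEpiLoc)
    (hCF : L.ConditionallyFlat) : L.Admissible := by
  intro T Q α hα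
  set ℓQ := L.ell Q with hℓQ
  have hker := cf_kerIncl_isKernelOf α
  have hse : ShortExact (kerIncl α) α := ⟨hker, hα⟩
  have hKloc : IsIso (L.ell (kerXMod α)) :=
    cf_local_ker L hL (L.iso_ell_obj T) (L.iso_ell_obj Q) α
  obtain ⟨wK, hwK1, hwK2⟩ := hKloc
  obtain ⟨wX, hwX1, hwX2⟩ := L.iso_ell_obj T
  obtain ⟨wY, hwY1, hwY2⟩ := L.iso_ell_obj Q
  have hκtr : comp (kerIncl α) wK = comp wX (L.map (kerIncl α)) := by
    apply cf_cancel_right (⟨wK, hwK1, hwK2⟩ : IsIso (L.ell (kerXMod α)))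
    calc comp (comp (kerIncl α) wK) (L.ell (kerXMod α))
        = comp (kerIncl α) (comp wK (L.ell (kerXMod α))) := rfl
      _ = kerIncl α := by rw [hwK1]; try rfl
      _ = comp (comp wX (L.ell (L.obj T))) (kerIncl α) := by rw [hwX1]; try rfl
      _ = comp wX (comp (L.ell (L.obj T)) (kerIncl α)) := rfl
      _ = comp wX (comp (L.map (kerIncl α)) (L.ell (kerXMod α))) := by
          rw [L.natural (kerIncl α)]
      _ = comp (comp wX (L.map (kerIncl α))) (L.ell (kerXMod α)) := rfl
  have hαtr : comp α wX = comp wY (L.map α) := by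
    apply cf_cancel_right (⟨wX, hwX1, hwX2⟩ : IsIso (L.ell (L.obj T)))
    calc comp (comp α wX) (L.ell (L.obj T)) = comp α (comp wX (L.ell (L.obj T))) := rfl
      _ = α := by rw [hwX1]; try rfl
      _ = comp (comp wY (L.ell (L.obj Q))) α := by rw [hwY1]; try rfl
      _ = comp wY (comp (L.ell (L.obj Q)) α) := rfl
      _ = comp wY (comp (L.map α) (L.ell (L.obj T))) := by rw [L.natural α]
      _ = comp (comp wY (L.map α)) (L.ell (L.obj T)) := rfl
  have hκL : IsKernelOf (L.map (kerIncl α)) (L.map α) :=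
    cf_kernel_transport hker (⟨L.ell (kerXMod α), hwK2, hwK1⟩ : IsIso wK)
      (⟨L.ell (L.obj T), hwX2, hwX1⟩ : IsIso wX)
      (⟨L.ell (L.obj Q), hwY2, hwY1⟩ : IsIso wY) hκtr hαtr
  have hflat : L.LFlat (kerIncl α) α := ⟨hκL, cf_map_regEpi L hL hα⟩
  have hS := hCF _ _ _ (kerIncl α) α hse hflat Q ℓQ
  -- comparison with the concrete pullback of `L.map α` along `L.map ℓQ`
  have hc : comp (L.map α) (L.map (pbFst α ℓQ)) = comp (L.map ℓQ) (L.map (pbSnd α ℓQ)) := by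
    rw [← L.map_comp, ← L.map_comp, cf_pb_comm]
  set c : XModHom (L.obj (pbXMod α ℓQ)) (pbXMod (L.map α) (L.map ℓQ)) :=
    cf_pbLift (L.map α) (L.map ℓQ) (L.map (pbFst α ℓQ)) (L.map (pbSnd α ℓQ)) hc with hcdef
  have hrel : comp (L.map (pbFst α ℓQ)) (L.map (pbIn (kerIncl α) α ℓQ hse.1.1)) =
      L.map (kerIncl α) := by
    rw [← L.map_comp, cf_pbFst_pbIn]
  have htrrel : comp (L.map (pbSnd α ℓQ)) (L.map (pbIn (kerIncl α) α ℓQ hse.1.1)) =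
      triv (L.obj (kerXMod α)) (L.obj Q) := hS.1.1
  have kex1 := cf_kernel_exact hS.1
  have kex2 := cf_kernel_exact hκL
  have hb1 : Function.Bijective c.f1 := by
    constructor
    · rw [injective_iff_map_eq_one]
      intro a ha
      have h1 : (L.map (pbFst α ℓQ)).f1 a = 1 := congrArg (fun z => z.1.1) ha
      have h2 : (L.map (pbSnd α ℓQ)).f1 a = 1 := congrArg (fun z => z.1.2) ha
      obtain ⟨n, hn⟩ := (kex1.2.2.1 a).mp h2
      have : (L.map (kerIncl α)).f1 n = 1 := by
        rw [← cf_congr_f1 hrel n]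
        show (L.map (pbFst α ℓQ)).f1 ((L.map (pbIn (kerIncl α) α ℓQ hse.1.1)).f1 n) = 1
        rw [hn, h1]
      have hn1 : n = 1 := kex2.1 (by rw [this, map_one])
      rw [← hn, hn1, map_one]
    · rintro ⟨⟨b, y⟩, hby⟩
      obtain ⟨a₀, ha₀⟩ := hS.2.1 y
      have hz : (L.map α).f1 (b * ((L.map (pbFst α ℓQ)).f1 a₀)⁻¹) = 1 := by
        have e := cf_congr_f1 hc a₀
        simp only [cf_comp_f1] at e
        rw [map_mul, map_inv, e, ha₀, hby, mul_inv_cancel]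
      obtain ⟨n, hn⟩ := (kex2.2.2.1 _).mp hz
      refine ⟨(L.map (pbIn (kerIncl α) α ℓQ hse.1.1)).f1 n * a₀, ?_⟩
      apply Subtype.ext
      apply Prod.ext
      · show (L.map (pbFst α ℓQ)).f1 ((L.map (pbIn (kerIncl α) α ℓQ hse.1.1)).f1 n * a₀) = b
        have e1 := cf_congr_f1 hrel n
        simp only [cf_comp_f1] at e1
        rw [map_mul, e1, hn, inv_mul_cancel_right]
      · show (L.map (pbSnd α ℓQ)).f1 ((L.map (pbIn (kerIncl α) α ℓQ hse.1.1)).f1 n * a₀) = y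
        have e2 := cf_congr_f1 htrrel n
        simp only [cf_comp_f1, cf_triv_f1] at e2
        rw [map_mul, e2, ha₀, one_mul]
  have hb2 : Function.Bijective c.f2 := by
    constructor
    · rw [injective_iff_map_eq_one]
      intro a ha
      have h1 : (L.map (pbFst α ℓQ)).f2 a = 1 := congrArg (fun z => z.1.1) ha
      have h2 : (L.map (pbSnd α ℓQ)).f2 a = 1 := congrArg (fun z => z.1.2) ha
      obtain ⟨n, hn⟩ := (kex1.2.2.2 a).mp h2
      have : (L.map (kerIncl α)).f2 n = 1 := by
        rw [← cf_congr_f2 hrel n]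
        show (L.map (pbFst α ℓQ)).f2 ((L.map (pbIn (kerIncl α) α ℓQ hse.1.1)).f2 n) = 1
        rw [hn, h1]
      have hn1 : n = 1 := kex2.2.1 (by rw [this, map_one])
      rw [← hn, hn1, map_one]
    · rintro ⟨⟨b, y⟩, hby⟩
      obtain ⟨a₀, ha₀⟩ := hS.2.2 y
      have hz : (L.map α).f2 (b * ((L.map (pbFst α ℓQ)).f2 a₀)⁻¹) = 1 := by
        have e := cf_congr_f2 hc a₀
        simp only [cf_comp_f2] at e
        rw [map_mul, map_inv, e, ha₀, hby, mul_inv_cancel]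
      obtain ⟨n, hn⟩ := (kex2.2.2.2 _).mp hz
      refine ⟨(L.map (pbIn (kerIncl α) α ℓQ hse.1.1)).f2 n * a₀, ?_⟩
      apply Subtype.ext
      apply Prod.ext
      · show (L.map (pbFst α ℓQ)).f2 ((L.map (pbIn (kerIncl α) α ℓQ hse.1.1)).f2 n * a₀) = b
        have e1 := cf_congr_f2 hrel n
        simp only [cf_comp_f2] at e1
        rw [map_mul, e1, hn, inv_mul_cancel_right]
      · show (L.map (pbSnd α ℓQ)).f2 ((L.map (pbIn (kerIncl α) α ℓQ hse.1.1)).f2 n * a₀) = y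
        have e2 := cf_congr_f2 htrrel n
        simp only [cf_comp_f2, cf_triv_f2] at e2
        rw [map_mul, e2, ha₀, one_mul]
  have hciso : IsIso c := cf_isIso_of_bijective c hb1 hb2
  have hsq := cf_pbsq_precomp (cf_pb_isPullback (L.map α) (L.map ℓQ)) hciso
  have e1 : comp (pbFst (L.map α) (L.map ℓQ)) c = L.map (pbFst α ℓQ) :=
    cf_pbFst_pbLift (L.map α) (L.map ℓQ) _ _ hc
  have e2 : comp (pbSnd (L.map α) (L.map ℓQ)) c = L.map (pbSnd α ℓQ) :=
    cf_pbSnd_pbLift (L.map α) (L.map ℓQ) _ _ hc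
  rw [e1, e2] at hsq
  exact hsq

end Directions
section AdmToCF

open XModHom

theorem cf_adm_to_cf (L : LocalizationFunctor) (hL : L.RegEpiLoc)
    (hAdm : L.Admissible) : L.ConditionallyFlat := by
  intro N T Q κ α hse hflat Q' g
  set ℓT := L.ell T
  set ℓN := L.ell N
  set ℓQ := L.ell Q
  set ℓQ' := L.ell Q'
  have hκα := hse.1
  have hLκα := hflat.1
  have kexE := cf_kernel_exact hκα
  have kexLE := cf_kernel_exact hLκα
  -- the pullback of the localized sequence along `L.map g`
  set β : XModHom (pbXMod (L.map α) (L.map g)) (L.obj Q') := pbSnd (L.map α) (L.map g) with hβdef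
  have hP'loc : IsIso (L.ell (pbXMod (L.map α) (L.map g))) :=
    cf_local_pb L (L.iso_ell_obj T) (L.iso_ell_obj Q') (L.iso_ell_obj Q) (L.map α) (L.map g)
  set κ' : XModHom (L.obj N) (pbXMod (L.map α) (L.map g)) :=
    pbIn (L.map κ) (L.map α) (L.map g) hLκα.1 with hκ'def
  have hκ'ker : IsKernelOf κ' β :=
    cf_pbIn_isKernelOf (L.map α) (L.map g) (L.map κ) hLκα hLκα.1
  have hβre : RegEpi β := cf_pbSnd_regEpi (L.map α) (L.map g) hflat.2
  have hS₂ := cf_main_flat L hL hAdm hP'loc (L.iso_ell_obj N) β hβre κ' hκ'ker hκ'ker.1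
  -- the comparison map `m` between the two pullbacks
  have hcm₀ : comp (L.map α) (comp ℓT (pbFst α g)) = comp (L.map g) (comp ℓQ' (pbSnd α g)) := by
    calc comp (L.map α) (comp ℓT (pbFst α g)) = comp (comp (L.map α) ℓT) (pbFst α g) := rfl
      _ = comp (comp ℓQ α) (pbFst α g) := by rw [← L.natural α]
      _ = comp ℓQ (comp α (pbFst α g)) := rfl
      _ = comp ℓQ (comp g (pbSnd α g)) := by rw [cf_pb_comm]
      _ = comp (comp ℓQ g) (pbSnd α g) := rfl
      _ = comp (comp (L.map g) ℓQ') (pbSnd α g) := by rw [L.natural g]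
      _ = comp (L.map g) (comp ℓQ' (pbSnd α g)) := rfl
  set m₀ : XModHom (pbXMod α g) (pbXMod (L.map α) (L.map g)) :=
    cf_pbLift (L.map α) (L.map g) (comp ℓT (pbFst α g)) (comp ℓQ' (pbSnd α g)) hcm₀ with hm₀def
  have hcm : comp β m₀ = comp ℓQ' (pbSnd α g) :=
    cf_pbSnd_pbLift (L.map α) (L.map g) _ _ hcm₀
  set m : XModHom (pbXMod α g) (pbXMod β ℓQ') := cf_pbLift β ℓQ' m₀ (pbSnd α g) hcm with hmdef
  have hrel1 : comp (pbSnd β ℓQ') m = pbSnd α g := cf_pbSnd_pbLift β ℓQ' m₀ _ hcm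
  have hrel2 : comp m (pbIn κ α g hse.1.1) = comp (pbIn κ' β ℓQ' hκ'ker.1) ℓN := by
    refine cf_ext' (fun n => ?_) (fun n => ?_)
    · refine Subtype.ext (Prod.ext (Subtype.ext (Prod.ext ?_ ?_)) rfl)
      · have := cf_congr_f1 (L.natural κ) n
        simp only [cf_comp_f1] at this
        exact this
      · exact map_one ℓQ'.f1
    · refine Subtype.ext (Prod.ext (Subtype.ext (Prod.ext ?_ ?_)) rfl)
      · have := cf_congr_f2 (L.natural κ) n
        simp only [cf_comp_f2] at this
        exact this
      · exact map_one ℓQ'.f2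
  -- `m` is surjective in both components
  have hsur1 : Function.Surjective m.f1 := by
    rintro ⟨⟨⟨⟨x, y⟩, h1⟩, q'⟩, h2⟩
    have h2' : y = ℓQ'.f1 q' := h2
    obtain ⟨t₀, ht₀⟩ := (hL T).1 x
    have hs : ℓQ.f1 (α.f1 t₀ * (g.f1 q')⁻¹) = 1 := by
      have e1 := cf_congr_f1 (L.natural α) t₀
      have e2 := cf_congr_f1 (L.natural g) q'
      simp only [cf_comp_f1] at e1 e2
      rw [map_mul, map_inv, e1, e2, ht₀]
      have h1' : (L.map α).f1 x = (L.map g).f1 y := h1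
      rw [h1', h2', mul_inv_cancel]
    obtain ⟨t₂, ht₂⟩ := hse.2.1 (α.f1 t₀ * (g.f1 q')⁻¹)
    have hz : (L.map α).f1 (ℓT.f1 t₂) = 1 := by
      have e1 := cf_congr_f1 (L.natural α) t₂
      simp only [cf_comp_f1] at e1
      rw [← e1, ht₂, hs]
    obtain ⟨z, hzz⟩ := (kexLE.2.2.1 _).mp hz
    obtain ⟨n, hn⟩ := (hL N).1 z
    have hℓκ : ℓT.f1 (κ.f1 n) = ℓT.f1 t₂ := by
      have e1 := cf_congr_f1 (L.natural κ) n
      simp only [cf_comp_f1] at e1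
      rw [e1, hn, hzz]
    have hακ : α.f1 (κ.f1 n) = 1 := by
      have := cf_congr_f1 hκα.1 n
      simpa using this
    have hmem : α.f1 ((κ.f1 n * t₂⁻¹) * t₀) = g.f1 q' := by
      rw [map_mul, map_mul, map_inv, hακ, ht₂, one_mul]
      group
    refine ⟨⟨((κ.f1 n * t₂⁻¹) * t₀, q'), hmem⟩, ?_⟩
    refine Subtype.ext (Prod.ext (Subtype.ext (Prod.ext ?_ ?_)) rfl)
    · show ℓT.f1 ((κ.f1 n * t₂⁻¹) * t₀) = x
      rw [map_mul, map_mul, map_inv, hℓκ, mul_inv_cancel, one_mul, ht₀]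
    · exact h2'.symm
  have hsur2 : Function.Surjective m.f2 := by
    rintro ⟨⟨⟨⟨x, y⟩, h1⟩, q'⟩, h2⟩
    have h2' : y = ℓQ'.f2 q' := h2
    obtain ⟨t₀, ht₀⟩ := (hL T).2 x
    have hs : ℓQ.f2 (α.f2 t₀ * (g.f2 q')⁻¹) = 1 := by
      have e1 := cf_congr_f2 (L.natural α) t₀
      have e2 := cf_congr_f2 (L.natural g) q'
      simp only [cf_comp_f2] at e1 e2
      rw [map_mul, map_inv, e1, e2, ht₀]
      have h1' : (L.map α).f2 x = (L.map g).f2 y := h1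
      rw [h1', h2', mul_inv_cancel]
    obtain ⟨t₂, ht₂⟩ := hse.2.2 (α.f2 t₀ * (g.f2 q')⁻¹)
    have hz : (L.map α).f2 (ℓT.f2 t₂) = 1 := by
      have e1 := cf_congr_f2 (L.natural α) t₂
      simp only [cf_comp_f2] at e1
      rw [← e1, ht₂, hs]
    obtain ⟨z, hzz⟩ := (kexLE.2.2.2 _).mp hz
    obtain ⟨n, hn⟩ := (hL N).2 z
    have hℓκ : ℓT.f2 (κ.f2 n) = ℓT.f2 t₂ := by
      have e1 := cf_congr_f2 (L.natural κ) n
      simp only [cf_comp_f2] at e1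
      rw [e1, hn, hzz]
    have hακ : α.f2 (κ.f2 n) = 1 := by
      have := cf_congr_f2 hκα.1 n
      simpa using this
    have hmem : α.f2 ((κ.f2 n * t₂⁻¹) * t₀) = g.f2 q' := by
      rw [map_mul, map_mul, map_inv, hακ, ht₂, one_mul]
      group
    refine ⟨⟨((κ.f2 n * t₂⁻¹) * t₀, q'), hmem⟩, ?_⟩
    refine Subtype.ext (Prod.ext (Subtype.ext (Prod.ext ?_ ?_)) rfl)
    · show ℓT.f2 ((κ.f2 n * t₂⁻¹) * t₀) = x
      rw [map_mul, map_mul, map_inv, hℓκ, mul_inv_cancel, one_mul, ht₀]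
    · exact h2'.symm
  -- elements killed by `m` are killed by the coaugmentation of the pullback
  have hker1 : ∀ w, m.f1 w = 1 → (L.ell (pbXMod α g)).f1 w = 1 := by
    rintro ⟨⟨t, q'⟩, hw⟩ hm1
    have hq' : q' = 1 := congrArg (fun z => z.1.2) hm1
    have ht : ℓT.f1 t = 1 := congrArg (fun z => z.1.1.1.1) hm1
    have hαt : α.f1 t = 1 := by
      have : α.f1 t = g.f1 q' := hw
      rw [this, hq', map_one]
    obtain ⟨n, hn⟩ := (kexE.2.2.1 t).mp hαt
    have hℓn : ℓN.f1 n = 1 := by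
      apply kexLE.1
      have e1 := cf_congr_f1 (L.natural κ) n
      simp only [cf_comp_f1] at e1
      rw [← e1, hn, ht, map_one]
    have hwin : (⟨(t, q'), hw⟩ : (pbXMod α g).M) = (pbIn κ α g hse.1.1).f1 n := by
      refine Subtype.ext (Prod.ext ?_ ?_)
      · exact hn.symm
      · exact hq'
    rw [hwin]
    have e1 := cf_congr_f1 (L.natural (pbIn κ α g hse.1.1)) n
    simp only [cf_comp_f1] at e1
    rw [e1, hℓn, map_one]
  have hker2 : ∀ w, m.f2 w = 1 → (L.ell (pbXMod α g)).f2 w = 1 := by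
    rintro ⟨⟨t, q'⟩, hw⟩ hm1
    have hq' : q' = 1 := congrArg (fun z => z.1.2) hm1
    have ht : ℓT.f2 t = 1 := congrArg (fun z => z.1.1.1.1) hm1
    have hαt : α.f2 t = 1 := by
      have : α.f2 t = g.f2 q' := hw
      rw [this, hq', map_one]
    obtain ⟨n, hn⟩ := (kexE.2.2.2 t).mp hαt
    have hℓn : ℓN.f2 n = 1 := by
      apply kexLE.2.1
      have e1 := cf_congr_f2 (L.natural κ) n
      simp only [cf_comp_f2] at e1
      rw [← e1, hn, ht, map_one]
    have hwin : (⟨(t, q'), hw⟩ : (pbXMod α g).G) = (pbIn κ α g hse.1.1).f2 n := by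
      refine Subtype.ext (Prod.ext ?_ ?_)
      · exact hn.symm
      · exact hq'
    rw [hwin]
    have e1 := cf_congr_f2 (L.natural (pbIn κ α g hse.1.1)) n
    simp only [cf_comp_f2] at e1
    rw [e1, hℓn, map_one]
  -- the factorization `Φ` of the coaugmentation through `m`
  obtain ⟨φ1, hφ1⟩ := cf_factor m.f1 (L.ell (pbXMod α g)).f1 hsur1 hker1
  obtain ⟨φ2, hφ2⟩ := cf_factor m.f2 (L.ell (pbXMod α g)).f2 hsur2 hker2
  set Φ : XModHom (pbXMod β ℓQ') (L.obj (pbXMod α g)) :=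
    { f1 := φ1
      f2 := φ2
      comm_d := by
        intro x
        obtain ⟨a, rfl⟩ := hsur1 x
        rw [hφ1, m.comm_d, hφ2, (L.ell (pbXMod α g)).comm_d]
      equiv := by
        intro b x
        obtain ⟨q, rfl⟩ := hsur2 b
        obtain ⟨a, rfl⟩ := hsur1 x
        rw [← m.equiv, hφ1, hφ2, (L.ell (pbXMod α g)).equiv, hφ1] } with hΦdef
  have hΦm : comp Φ m = L.ell (pbXMod α g) := cf_ext' (fun a => hφ1 a) (fun a => hφ2 a)
  -- `L.map m` is an isomorphism
  obtain ⟨gLP, hg1, hg2⟩ := L.iso_ell_obj (pbXMod α g)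
  have hcompiso : IsIso (comp (comp gLP (L.map Φ)) (L.map m)) := by
    have e : comp (comp gLP (L.map Φ)) (L.map m) = comp gLP (L.map (L.ell (pbXMod α g))) := by
      rw [cf_comp_assoc, ← L.map_comp, hΦm]
    rw [e]
    exact cf_isIso_comp (⟨L.ell (L.obj (pbXMod α g)), hg2, hg1⟩ : IsIso gLP)
      (L.iso_map_ell (pbXMod α g))
  have hLmre := cf_map_regEpi L hL (⟨hsur1, hsur2⟩ : RegEpi m)
  have hLmiso : IsIso (L.map m) := by
    apply cf_isIso_of_bijective
    · refine ⟨?_, hLmre.1⟩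
      have hbij := (cf_bijective_of_isIso hcompiso).1
      exact Function.Injective.of_comp (f := (comp gLP (L.map Φ)).f1) hbij.1
    · refine ⟨?_, hLmre.2⟩
      have hbij := (cf_bijective_of_isIso hcompiso).2
      exact Function.Injective.of_comp (f := (comp gLP (L.map Φ)).f2) hbij.1
  -- transport the flatness of the localized pullback sequence along `L.map m`
  constructor
  · refine cf_kernel_transport hS₂.1 (L.iso_map_ell N) hLmiso cf_isIso_id ?_ ?_
    · rw [← L.map_comp, ← L.map_comp, hrel2]
    · rw [← L.map_comp, hrel1, cf_id_comp]
  · exact cf_map_regEpi L hL (cf_pbSnd_regEpi α g hse.2)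

end AdmToCF

/-- For a regular-epi localization functor `L` on `XMod`,
conditional flatness is equivalent to admissibility for the class of regular
epimorphisms. -/
theorem conditionallyFlat_iff_admissible (L : LocalizationFunctor)
    (hL : L.RegEpiLoc) :
    L.ConditionallyFlat ↔ L.Admissible :=
  ⟨fun h => cf_cf_to_adm L hL h, fun h => cf_adm_to_cf L hL h⟩
end

section
/- Let A be any crossed module of groups and let P_A be a nullification functor with respect to A, i.e. a localization functor on XMod whose local objects are exactly the A-null crossed modules and whose coaugmentation p^T : T → P_A T is a regular epimorphism for every T. Then P_A is admissible for the class of regular epimorphisms: applying P_A to any pullback square obtained by pulling back a regular epimorphism h : P_A T → P_A Q along the coaugmentation p^Q : Q → P_A Q yields again a pullback square. -/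
set_option linter.unusedVariables false

/-! ### Auxiliary machinery for the proof -/

namespace XModAux

open XModHom

theorem comp_assoc {A B C D : XMod} (h : XModHom C D) (g : XModHom B C) (f : XModHom A B) :
    XModHom.comp h (XModHom.comp g f) = XModHom.comp (XModHom.comp h g) f :=
  XModHom.ext rfl rfl

theorem id_comp {A B : XMod} (f : XModHom A B) : XModHom.comp (XModHom.id B) f = f :=
  XModHom.ext (MonoidHom.ext fun _ => rfl) (MonoidHom.ext fun _ => rfl)

theorem comp_id {A B : XMod} (f : XModHom A B) : XModHom.comp f (XModHom.id A) = f :=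
  XModHom.ext (MonoidHom.ext fun _ => rfl) (MonoidHom.ext fun _ => rfl)

theorem comp_f1 {A B C : XMod} (g : XModHom B C) (f : XModHom A B) (x : A.M) :
    (XModHom.comp g f).f1 x = g.f1 (f.f1 x) := rfl

theorem comp_f2 {A B C : XMod} (g : XModHom B C) (f : XModHom A B) (x : A.G) :
    (XModHom.comp g f).f2 x = g.f2 (f.f2 x) := rfl

theorem id_f1 {A : XMod} (x : A.M) : (XModHom.id A).f1 x = x := rfl

theorem id_f2 {A : XMod} (x : A.G) : (XModHom.id A).f2 x = x := rfl

theorem congr_f1 {A B : XMod} {f g : XModHom A B} (h : f = g) (x : A.M) :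
    f.f1 x = g.f1 x := by rw [h]

theorem congr_f2 {A B : XMod} {f g : XModHom A B} (h : f = g) (x : A.G) :
    f.f2 x = g.f2 x := by rw [h]

/-- If `L f` is an isomorphism and `Z` is local, then `Z` is `f`-local. -/
theorem flocal_of_iso (L : LocalizationFunctor) {X Y : XMod} (f : XModHom X Y)
    (hf : XModHom.IsIso (L.map f)) {Z : XMod} (hZ : L.IsLocal Z) : FLocal f Z := by
  obtain ⟨θ, hθ1, hθ2⟩ := hf
  obtain ⟨e, he1, he2⟩ := hZ
  have key1 : ∀ (φ : XModHom Y Z) (y : Y.M),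
      φ.f1 y = e.f1 ((L.map φ).f1 ((L.ell Y).f1 y)) := by
    intro φ y
    have h1 := congr_f1 (L.natural φ) y
    have h2 := congr_f1 he1 (φ.f1 y)
    simp only [comp_f1, id_f1] at h1 h2
    rw [← h1]; exact h2.symm
  have key2 : ∀ (φ : XModHom Y Z) (y : Y.G),
      φ.f2 y = e.f2 ((L.map φ).f2 ((L.ell Y).f2 y)) := by
    intro φ y
    have h1 := congr_f2 (L.natural φ) y
    have h2 := congr_f2 he1 (φ.f2 y)
    simp only [comp_f2, id_f2] at h1 h2
    rw [← h1]; exact h2.symm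
  constructor
  · intro φ φ' hφ
    replace hφ : XModHom.comp φ f = XModHom.comp φ' f := hφ
    have hm : XModHom.comp (L.map φ) (L.map f) = XModHom.comp (L.map φ') (L.map f) := by
      rw [← L.map_comp, ← L.map_comp, hφ]
    have hmm1 : ∀ w, (L.map φ).f1 w = (L.map φ').f1 w := by
      intro w
      have hw := congr_f1 hθ2 w
      have hc := congr_f1 hm (θ.f1 w)
      simp only [comp_f1, id_f1] at hw hc
      rw [← hw]
      exact hc
    have hmm2 : ∀ w, (L.map φ).f2 w = (L.map φ').f2 w := by
      intro w
      have hw := congr_f2 hθ2 w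
      have hc := congr_f2 hm (θ.f2 w)
      simp only [comp_f2, id_f2] at hw hc
      rw [← hw]
      exact hc
    apply XModHom.ext
    · exact MonoidHom.ext fun y => by rw [key1 φ, key1 φ', hmm1]
    · exact MonoidHom.ext fun y => by rw [key2 φ, key2 φ', hmm2]
  · intro ux
    refine ⟨XModHom.comp e (XModHom.comp (L.map ux) (XModHom.comp θ (L.ell Y))), ?_⟩
    show XModHom.comp _ f = ux
    have s2a : ∀ w, θ.f1 ((L.map f).f1 w) = w := fun w => by
      have := congr_f1 hθ1 w; simpa [comp_f1, id_f1] using this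
    have s2b : ∀ w, θ.f2 ((L.map f).f2 w) = w := fun w => by
      have := congr_f2 hθ1 w; simpa [comp_f2, id_f2] using this
    have s4a : ∀ z, e.f1 ((L.ell Z).f1 z) = z := fun z => by
      have := congr_f1 he1 z; simpa [comp_f1, id_f1] using this
    have s4b : ∀ z, e.f2 ((L.ell Z).f2 z) = z := fun z => by
      have := congr_f2 he1 z; simpa [comp_f2, id_f2] using this
    apply XModHom.ext
    · apply MonoidHom.ext
      intro x
      show e.f1 ((L.map ux).f1 (θ.f1 ((L.ell Y).f1 (f.f1 x)))) = ux.f1 x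
      have n1 := congr_f1 (L.natural f) x
      have n3 := congr_f1 (L.natural ux) x
      simp only [comp_f1] at n1 n3
      rw [n1, s2a, ← n3, s4a]
    · apply MonoidHom.ext
      intro x
      show e.f2 ((L.map ux).f2 (θ.f2 ((L.ell Y).f2 (f.f2 x)))) = ux.f2 x
      have n1 := congr_f2 (L.natural f) x
      have n3 := congr_f2 (L.natural ux) x
      simp only [comp_f2] at n1 n3
      rw [n1, s2b, ← n3, s4b]

/-- If every local object is `f`-local, then `L f` is an isomorphism. -/
theorem iso_of_flocal (L : LocalizationFunctor) {X Y : XMod} (f : XModHom X Y)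
    (h : ∀ Z : XMod, L.IsLocal Z → FLocal f Z) : XModHom.IsIso (L.map f) := by
  have hLX : L.IsLocal (L.obj X) := L.iso_ell_obj X
  have hLY : L.IsLocal (L.obj Y) := L.iso_ell_obj Y
  obtain ⟨g, hg⟩ := (h _ hLX).2 (L.ell X)
  replace hg : XModHom.comp g f = L.ell X := hg
  obtain ⟨gh, hgh⟩ := (flocal_of_iso L (L.ell Y) (L.iso_map_ell Y) hLX).2 g
  replace hgh : XModHom.comp gh (L.ell Y) = g := hgh
  have hfg : XModHom.comp (L.map f) g = L.ell Y := by
    apply (h _ hLY).1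
    show XModHom.comp (XModHom.comp (L.map f) g) f = XModHom.comp (L.ell Y) f
    calc XModHom.comp (XModHom.comp (L.map f) g) f
        = XModHom.comp (L.map f) (XModHom.comp g f) := (comp_assoc _ _ _).symm
      _ = XModHom.comp (L.map f) (L.ell X) := by rw [hg]
      _ = XModHom.comp (L.ell Y) f := (L.natural f).symm
  refine ⟨gh, ?_, ?_⟩
  · apply (flocal_of_iso L (L.ell X) (L.iso_map_ell X) hLX).1
    show XModHom.comp (XModHom.comp gh (L.map f)) (L.ell X)
        = XModHom.comp (XModHom.id _) (L.ell X)
    calc XModHom.comp (XModHom.comp gh (L.map f)) (L.ell X)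
        = XModHom.comp gh (XModHom.comp (L.map f) (L.ell X)) := (comp_assoc _ _ _).symm
      _ = XModHom.comp gh (XModHom.comp (L.ell Y) f) := by rw [← L.natural f]
      _ = XModHom.comp (XModHom.comp gh (L.ell Y)) f := comp_assoc _ _ _
      _ = XModHom.comp g f := by rw [hgh]
      _ = L.ell X := hg
      _ = XModHom.comp (XModHom.id _) (L.ell X) := (id_comp _).symm
  · apply (flocal_of_iso L (L.ell Y) (L.iso_map_ell Y) hLY).1
    show XModHom.comp (XModHom.comp (L.map f) gh) (L.ell Y)
        = XModHom.comp (XModHom.id _) (L.ell Y)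
    calc XModHom.comp (XModHom.comp (L.map f) gh) (L.ell Y)
        = XModHom.comp (L.map f) (XModHom.comp gh (L.ell Y)) := (comp_assoc _ _ _).symm
      _ = XModHom.comp (L.map f) g := by rw [hgh]
      _ = L.ell Y := hfg
      _ = XModHom.comp (XModHom.id _) (L.ell Y) := (id_comp _).symm

section QuotientXMod

variable (X : XMod) (N1 : Subgroup X.M) (N2 : Subgroup X.G)

/-- The action map on the quotient. -/
def qact (hN1 : N1.Normal) (hstab : ∀ (b : X.G), ∀ m ∈ N1, X.act b m ∈ N1)
    (b : X.G) : (X.M ⧸ N1) →* (X.M ⧸ N1) :=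
  letI := hN1
  QuotientGroup.map N1 N1 (X.act b).toMonoidHom (fun m hm => hstab b m hm)

theorem qact_mk (hN1 : N1.Normal) (hstab : ∀ (b : X.G), ∀ m ∈ N1, X.act b m ∈ N1)
    (b : X.G) (m : X.M) :
    letI := hN1
    qact X N1 hN1 hstab b (QuotientGroup.mk m) = QuotientGroup.mk (X.act b m) := rfl

/-- The action automorphism on the quotient. -/
def qactAut (hN1 : N1.Normal) (hstab : ∀ (b : X.G), ∀ m ∈ N1, X.act b m ∈ N1)
    (b : X.G) :
    letI := hN1
    MulAut (X.M ⧸ N1) :=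
  letI := hN1
  { toFun := qact X N1 hN1 hstab b
    invFun := qact X N1 hN1 hstab b⁻¹
    left_inv := fun x => by
      refine QuotientGroup.induction_on x ?_
      intro m
      show QuotientGroup.mk (X.act b⁻¹ (X.act b m)) = QuotientGroup.mk m
      rw [X.act_inv_act]
    right_inv := fun x => by
      refine QuotientGroup.induction_on x ?_
      intro m
      show QuotientGroup.mk (X.act b (X.act b⁻¹ m)) = QuotientGroup.mk m
      rw [X.act_act_inv]
    map_mul' := map_mul _ }

/-- The action homomorphism on the quotient. -/
def qactHom (hN1 : N1.Normal) (hstab : ∀ (b : X.G), ∀ m ∈ N1, X.act b m ∈ N1) :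
    letI := hN1
    X.G →* MulAut (X.M ⧸ N1) :=
  letI := hN1
  { toFun := qactAut X N1 hN1 hstab
    map_one' := by
      apply MulEquiv.ext
      intro x
      refine QuotientGroup.induction_on x ?_
      intro m
      show QuotientGroup.mk (X.act 1 m) = QuotientGroup.mk m
      rw [map_one]
      rfl
    map_mul' := by
      intro b c
      apply MulEquiv.ext
      intro x
      refine QuotientGroup.induction_on x ?_
      intro m
      show QuotientGroup.mk (X.act (b * c) m) = QuotientGroup.mk (X.act b (X.act c m))
      rw [map_mul]
      rfl }

/-- The descended action homomorphism on the quotient. -/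
def qactBar (hN1 : N1.Normal) (hN2 : N2.Normal)
    (hstab : ∀ (b : X.G), ∀ m ∈ N1, X.act b m ∈ N1)
    (hcomm : ∀ k ∈ N2, ∀ m : X.M, X.act k m * m⁻¹ ∈ N1) :
    letI := hN1; letI := hN2
    (X.G ⧸ N2) →* MulAut (X.M ⧸ N1) :=
  letI := hN1; letI := hN2
  QuotientGroup.lift N2 (qactHom X N1 hN1 hstab) (by
    intro k hk
    apply MulEquiv.ext
    intro x
    refine QuotientGroup.induction_on x ?_
    intro m
    show QuotientGroup.mk (X.act k m) = QuotientGroup.mk m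
    refine (QuotientGroup.eq (s := N1)).mpr ?_
    have h := hN1.conj_mem _ (N1.inv_mem (hcomm k hk m)) ((X.act k m)⁻¹)
    simpa [mul_assoc] using h)

/-- The descended boundary map on the quotient. -/
def qd (hN1 : N1.Normal) (hN2 : N2.Normal) (hd : ∀ m ∈ N1, X.d m ∈ N2) :
    letI := hN1; letI := hN2
    (X.M ⧸ N1) →* (X.G ⧸ N2) :=
  letI := hN1; letI := hN2
  QuotientGroup.map N1 N2 X.d (fun m hm => hd m hm)

/-- The quotient crossed module. -/
def quotXMod (hN1 : N1.Normal) (hN2 : N2.Normal)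
    (hstab : ∀ (b : X.G), ∀ m ∈ N1, X.act b m ∈ N1)
    (hd : ∀ m ∈ N1, X.d m ∈ N2)
    (hcomm : ∀ k ∈ N2, ∀ m : X.M, X.act k m * m⁻¹ ∈ N1) : XMod :=
  letI := hN1; letI := hN2
  { M := X.M ⧸ N1
    G := X.G ⧸ N2
    act := qactBar X N1 N2 hN1 hN2 hstab hcomm
    d := qd X N1 N2 hN1 hN2 hd
    act_d := by
      intro b t
      refine QuotientGroup.induction_on b ?_
      intro bb
      refine QuotientGroup.induction_on t ?_
      intro m
      show (QuotientGroup.mk (X.d (X.act bb m)) : X.G ⧸ N2)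
          = QuotientGroup.mk bb * QuotientGroup.mk (X.d m) * (QuotientGroup.mk bb)⁻¹
      rw [X.act_d]
      rfl
    peiffer := by
      intro t s
      refine QuotientGroup.induction_on t ?_
      intro m
      refine QuotientGroup.induction_on s ?_
      intro n
      show (QuotientGroup.mk (X.act (X.d m) n) : X.M ⧸ N1)
          = QuotientGroup.mk m * QuotientGroup.mk n * (QuotientGroup.mk m)⁻¹
      rw [X.peiffer]
      rfl }

/-- The quotient projection morphism. -/
def quotProj (hN1 : N1.Normal) (hN2 : N2.Normal)
    (hstab : ∀ (b : X.G), ∀ m ∈ N1, X.act b m ∈ N1)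
    (hd : ∀ m ∈ N1, X.d m ∈ N2)
    (hcomm : ∀ k ∈ N2, ∀ m : X.M, X.act k m * m⁻¹ ∈ N1) :
    XModHom X (quotXMod X N1 N2 hN1 hN2 hstab hd hcomm) :=
  letI := hN1; letI := hN2
  { f1 := QuotientGroup.mk' N1
    f2 := QuotientGroup.mk' N2
    comm_d := fun _ => rfl
    equiv := fun _ _ => rfl }

/-- Lifting a morphism that kills `N1` and `N2` to the quotient. -/
def quotLift {Y : XMod} (hN1 : N1.Normal) (hN2 : N2.Normal)
    (hstab : ∀ (b : X.G), ∀ m ∈ N1, X.act b m ∈ N1)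
    (hd : ∀ m ∈ N1, X.d m ∈ N2)
    (hcomm : ∀ k ∈ N2, ∀ m : X.M, X.act k m * m⁻¹ ∈ N1)
    (v : XModHom X Y) (h1 : ∀ m ∈ N1, v.f1 m = 1) (h2 : ∀ k ∈ N2, v.f2 k = 1) :
    XModHom (quotXMod X N1 N2 hN1 hN2 hstab hd hcomm) Y :=
  letI := hN1; letI := hN2
  { f1 := QuotientGroup.lift N1 v.f1 h1
    f2 := QuotientGroup.lift N2 v.f2 h2
    comm_d := by
      intro n
      refine QuotientGroup.induction_on n ?_
      intro m
      exact v.comm_d m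
    equiv := by
      intro b n
      refine QuotientGroup.induction_on b ?_
      intro bb
      refine QuotientGroup.induction_on n ?_
      intro m
      exact v.equiv bb m }

theorem quotLift_comp_proj {Y : XMod} (hN1 : N1.Normal) (hN2 : N2.Normal)
    (hstab : ∀ (b : X.G), ∀ m ∈ N1, X.act b m ∈ N1)
    (hd : ∀ m ∈ N1, X.d m ∈ N2)
    (hcomm : ∀ k ∈ N2, ∀ m : X.M, X.act k m * m⁻¹ ∈ N1)
    (v : XModHom X Y) (h1 : ∀ m ∈ N1, v.f1 m = 1) (h2 : ∀ k ∈ N2, v.f2 k = 1) :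
    XModHom.comp (quotLift X N1 N2 hN1 hN2 hstab hd hcomm v h1 h2)
      (quotProj X N1 N2 hN1 hN2 hstab hd hcomm) = v :=
  XModHom.ext (MonoidHom.ext fun _ => rfl) (MonoidHom.ext fun _ => rfl)

end QuotientXMod

section PBHelpers

variable {T Q Q' Z : XMod} (α : XModHom T Q) (g : XModHom Q' Q)

/-- Element `(1, q)` of the pullback, for `q` killed by `g` (level 1). -/
def pbRM (q : Q'.M) (hq : g.f1 q = 1) : (pbXMod α g).M :=
  ⟨(1, q), by show α.f1 1 = g.f1 q; rw [map_one, hq]⟩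

/-- Element `(1, k)` of the pullback, for `k` killed by `g` (level 2). -/
def pbRG (k : Q'.G) (hk : g.f2 k = 1) : (pbXMod α g).G :=
  ⟨(1, k), by show α.f2 1 = g.f2 k; rw [map_one, hk]⟩

theorem pbRM_one (h : g.f1 1 = 1) : pbRM α g 1 h = 1 := Subtype.ext rfl

theorem pbRG_one (h : g.f2 1 = 1) : pbRG α g 1 h = 1 := Subtype.ext rfl

theorem pbRM_mul (q q' : Q'.M) (hq : g.f1 q = 1) (hq' : g.f1 q' = 1)
    (h : g.f1 (q * q') = 1) :
    pbRM α g (q * q') h = pbRM α g q hq * pbRM α g q' hq' :=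
  Subtype.ext (Prod.ext (one_mul (1 : T.M)).symm rfl)

theorem pbRG_mul (q q' : Q'.G) (hq : g.f2 q = 1) (hq' : g.f2 q' = 1)
    (h : g.f2 (q * q') = 1) :
    pbRG α g (q * q') h = pbRG α g q hq * pbRG α g q' hq' :=
  Subtype.ext (Prod.ext (one_mul (1 : T.G)).symm rfl)

theorem pbRM_inv (q : Q'.M) (hq : g.f1 q = 1) (h : g.f1 q⁻¹ = 1) :
    pbRM α g q⁻¹ h = (pbRM α g q hq)⁻¹ :=
  Subtype.ext (Prod.ext inv_one.symm rfl)

theorem pbRG_inv (q : Q'.G) (hq : g.f2 q = 1) (h : g.f2 q⁻¹ = 1) :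
    pbRG α g q⁻¹ h = (pbRG α g q hq)⁻¹ :=
  Subtype.ext (Prod.ext inv_one.symm rfl)

/-- Lift of an element of `Q'` to the pullback (level 1). -/
def pbLiftM (t : T.M) (q : Q'.M) (ht : α.f1 t = g.f1 q) : (pbXMod α g).M := ⟨(t, q), ht⟩

/-- Lift of an element of `Q'` to the pullback (level 2). -/
def pbLiftG (t : T.G) (q : Q'.G) (ht : α.f2 t = g.f2 q) : (pbXMod α g).G := ⟨(t, q), ht⟩

theorem pbRM_conj (t : T.M) (qq : Q'.M) (ht : α.f1 t = g.f1 qq)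
    (q : Q'.M) (hq : g.f1 q = 1) (h : g.f1 (qq * q * qq⁻¹) = 1) :
    pbRM α g (qq * q * qq⁻¹) h =
      pbLiftM α g t qq ht * pbRM α g q hq * (pbLiftM α g t qq ht)⁻¹ :=
  Subtype.ext (Prod.ext (by show (1 : T.M) = t * 1 * t⁻¹; simp) rfl)

theorem pbRG_conj (t : T.G) (qq : Q'.G) (ht : α.f2 t = g.f2 qq)
    (q : Q'.G) (hq : g.f2 q = 1) (h : g.f2 (qq * q * qq⁻¹) = 1) :
    pbRG α g (qq * q * qq⁻¹) h =
      pbLiftG α g t qq ht * pbRG α g q hq * (pbLiftG α g t qq ht)⁻¹ :=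
  Subtype.ext (Prod.ext (by show (1 : T.G) = t * 1 * t⁻¹; simp) rfl)

theorem pbRM_act (tb : T.G) (qb : Q'.G) (htb : α.f2 tb = g.f2 qb)
    (q : Q'.M) (hq : g.f1 q = 1) (h : g.f1 (Q'.act qb q) = 1) :
    pbRM α g (Q'.act qb q) h =
      (pbXMod α g).act (pbLiftG α g tb qb htb) (pbRM α g q hq) :=
  Subtype.ext (Prod.ext (map_one (T.act tb)).symm rfl)

theorem pbRM_d (q : Q'.M) (hq : g.f1 q = 1) (h : g.f2 (Q'.d q) = 1) :
    pbRG α g (Q'.d q) h = (pbXMod α g).d (pbRM α g q hq) :=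
  Subtype.ext (Prod.ext (map_one T.d).symm rfl)

theorem pbRG_commutator (k : Q'.G) (hk : g.f2 k = 1)
    (t : T.M) (qm : Q'.M) (ht : α.f1 t = g.f1 qm)
    (h : g.f1 (Q'.act k qm * qm⁻¹) = 1) :
    pbRM α g (Q'.act k qm * qm⁻¹) h =
      (pbXMod α g).act (pbRG α g k hk) (pbLiftM α g t qm ht)
        * (pbLiftM α g t qm ht)⁻¹ :=
  Subtype.ext (Prod.ext (by show (1 : T.M) = T.act 1 t * t⁻¹; simp) rfl)

variable (u : XModHom (pbXMod α g) Z)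

/-- Level-1 part of the kernel subgroup associated to `u`. -/
def KK1 : Subgroup Q'.M where
  carrier := {m | ∃ hm : g.f1 m = 1, u.f1 (pbRM α g m hm) = 1}
  one_mem' := ⟨map_one _, by rw [pbRM_one]; exact map_one u.f1⟩
  mul_mem' := by
    rintro a b ⟨ha1, ha2⟩ ⟨hb1, hb2⟩
    exact ⟨by rw [map_mul, ha1, hb1, one_mul],
      by rw [pbRM_mul α g a b ha1 hb1, map_mul, ha2, hb2, one_mul]⟩
  inv_mem' := by
    rintro a ⟨ha1, ha2⟩
    exact ⟨by rw [map_inv, ha1, inv_one],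
      by rw [pbRM_inv α g a ha1, map_inv, ha2, inv_one]⟩

/-- Level-2 part of the kernel subgroup associated to `u`. -/
def KK2 : Subgroup Q'.G where
  carrier := {k | ∃ hk : g.f2 k = 1, u.f2 (pbRG α g k hk) = 1}
  one_mem' := ⟨map_one _, by rw [pbRG_one]; exact map_one u.f2⟩
  mul_mem' := by
    rintro a b ⟨ha1, ha2⟩ ⟨hb1, hb2⟩
    exact ⟨by rw [map_mul, ha1, hb1, one_mul],
      by rw [pbRG_mul α g a b ha1 hb1, map_mul, ha2, hb2, one_mul]⟩
  inv_mem' := by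
    rintro a ⟨ha1, ha2⟩
    exact ⟨by rw [map_inv, ha1, inv_one],
      by rw [pbRG_inv α g a ha1, map_inv, ha2, inv_one]⟩

theorem mem_KK1 (m : Q'.M) :
    m ∈ KK1 α g u ↔ ∃ hm : g.f1 m = 1, u.f1 (pbRM α g m hm) = 1 := Iff.rfl

theorem mem_KK2 (k : Q'.G) :
    k ∈ KK2 α g u ↔ ∃ hk : g.f2 k = 1, u.f2 (pbRG α g k hk) = 1 := Iff.rfl

theorem KK1_ker {m : Q'.M} (hm : m ∈ KK1 α g u) : g.f1 m = 1 := by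
  obtain ⟨h, -⟩ := hm; exact h

theorem KK2_ker {k : Q'.G} (hk : k ∈ KK2 α g u) : g.f2 k = 1 := by
  obtain ⟨h, -⟩ := hk; exact h

theorem KK1_normal (hs1 : Function.Surjective α.f1) : (KK1 α g u).Normal := by
  constructor
  intro n hn q
  obtain ⟨hn1, hn2⟩ := hn
  have ht : α.f1 (Function.surjInv hs1 (g.f1 q)) = g.f1 q := Function.surjInv_eq hs1 _
  refine ⟨by rw [map_mul, map_mul, map_inv, hn1, mul_one, mul_inv_cancel], ?_⟩
  rw [pbRM_conj α g _ q ht n hn1, map_mul, map_mul, map_inv, hn2, mul_one, mul_inv_cancel]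

theorem KK2_normal (hs2 : Function.Surjective α.f2) : (KK2 α g u).Normal := by
  constructor
  intro n hn q
  obtain ⟨hn1, hn2⟩ := hn
  have ht : α.f2 (Function.surjInv hs2 (g.f2 q)) = g.f2 q := Function.surjInv_eq hs2 _
  refine ⟨by rw [map_mul, map_mul, map_inv, hn1, mul_one, mul_inv_cancel], ?_⟩
  rw [pbRG_conj α g _ q ht n hn1, map_mul, map_mul, map_inv, hn2, mul_one, mul_inv_cancel]

theorem KK1_stab (hs2 : Function.Surjective α.f2) :
    ∀ b : Q'.G, ∀ m ∈ KK1 α g u, Q'.act b m ∈ KK1 α g u := by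
  intro b m hm
  obtain ⟨hm1, hm2⟩ := hm
  have htb : α.f2 (Function.surjInv hs2 (g.f2 b)) = g.f2 b := Function.surjInv_eq hs2 _
  refine ⟨by rw [g.equiv, hm1, map_one], ?_⟩
  rw [pbRM_act α g _ b htb m hm1, u.equiv, hm2, map_one]

theorem KK1_d : ∀ m ∈ KK1 α g u, Q'.d m ∈ KK2 α g u := by
  intro m hm
  obtain ⟨hm1, hm2⟩ := hm
  refine ⟨by rw [← g.comm_d, hm1, map_one], ?_⟩
  rw [pbRM_d α g m hm1, ← u.comm_d, hm2, map_one]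

theorem KK2_commutator (hs1 : Function.Surjective α.f1) :
    ∀ k ∈ KK2 α g u, ∀ m : Q'.M, Q'.act k m * m⁻¹ ∈ KK1 α g u := by
  intro k hk m
  obtain ⟨hk1, hk2⟩ := hk
  have ht : α.f1 (Function.surjInv hs1 (g.f1 m)) = g.f1 m := Function.surjInv_eq hs1 _
  refine ⟨by rw [map_mul, map_inv, g.equiv, hk1, map_one, MulAut.one_apply,
    mul_inv_cancel], ?_⟩
  rw [pbRG_commutator α g k hk1 _ m ht, map_mul, map_inv, u.equiv, hk2, map_one,
    MulAut.one_apply, mul_inv_cancel]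

theorem KK1_im {A : XMod} (hAZ : ANull A Z) (φ : XModHom A Q')
    (hφ : XModHom.comp g φ = XModHom.triv A Q) (a : A.M) : φ.f1 a ∈ KK1 α g u := by
  have hm : g.f1 (φ.f1 a) = 1 := congr_f1 hφ a
  refine ⟨hm, ?_⟩
  have h0 := congr_f1 (hAZ (XModHom.comp u (pbInR α g φ hφ))) a
  exact h0

theorem KK2_im {A : XMod} (hAZ : ANull A Z) (φ : XModHom A Q')
    (hφ : XModHom.comp g φ = XModHom.triv A Q) (a : A.G) : φ.f2 a ∈ KK2 α g u := by
  have hm : g.f2 (φ.f2 a) = 1 := congr_f2 hφ a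
  refine ⟨hm, ?_⟩
  have h0 := congr_f2 (hAZ (XModHom.comp u (pbInR α g φ hφ))) a
  exact h0

end PBHelpers

section Core

/-- Action version of `pbRM_act` where the acting element is a right-leg element. -/
theorem pbRM_act' {T Q Q' : XMod} (α : XModHom T Q) (g : XModHom Q' Q)
    (k : Q'.G) (hk : g.f2 k = 1) (q : Q'.M) (hq : g.f1 q = 1)
    (h : g.f1 (Q'.act k q) = 1) :
    pbRM α g (Q'.act k q) h = (pbXMod α g).act (pbRG α g k hk) (pbRM α g q hq) :=
  Subtype.ext (Prod.ext (by show (1 : T.M) = T.act 1 1; simp) rfl)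

variable (A : XMod) (P : LocalizationFunctor)

/-- If the quotient by `N1, N2` is `A`-null, then the kernel of the coaugmentation
is contained in `N1, N2`. -/
theorem ker_le_of_quot_null
    (hloc : ∀ X : XMod, P.IsLocal X ↔ ANull A X)
    (Q : XMod) (N1 : Subgroup Q.M) (N2 : Subgroup Q.G)
    (n1 : N1.Normal) (n2 : N2.Normal)
    (nstab : ∀ (b : Q.G), ∀ m ∈ N1, Q.act b m ∈ N1)
    (nd : ∀ m ∈ N1, Q.d m ∈ N2)
    (ncomm : ∀ k ∈ N2, ∀ m : Q.M, Q.act k m * m⁻¹ ∈ N1)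
    (hnull : ANull A (quotXMod Q N1 N2 n1 n2 nstab nd ncomm)) :
    (∀ m : Q.M, (P.ell Q).f1 m = 1 → m ∈ N1) ∧
      (∀ k : Q.G, (P.ell Q).f2 k = 1 → k ∈ N2) := by
  haveI := n1; haveI := n2
  have hQloc : P.IsLocal (quotXMod Q N1 N2 n1 n2 nstab nd ncomm) := (hloc _).mpr hnull
  obtain ⟨ρhat, hρ⟩ := (flocal_of_iso P (P.ell Q) (P.iso_map_ell Q) hQloc).2
    (quotProj Q N1 N2 n1 n2 nstab nd ncomm)
  replace hρ : XModHom.comp ρhat (P.ell Q) = quotProj Q N1 N2 n1 n2 nstab nd ncomm := hρ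
  constructor
  · intro m hm
    have h := congr_f1 hρ m
    simp only [comp_f1] at h
    rw [hm, map_one] at h
    exact (QuotientGroup.eq_one_iff m).mp h.symm
  · intro k hk
    have h := congr_f2 hρ k
    simp only [comp_f2] at h
    rw [hk, map_one] at h
    exact (QuotientGroup.eq_one_iff k).mp h.symm

/-- The quotient of `Q` by the `u`-kernel subgroups is `A`-null. -/
theorem quot_KK_null
    (hloc : ∀ X : XMod, P.IsLocal X ↔ ANull A X)
    (T Q : XMod) (α : XModHom (P.obj T) (P.obj Q))
    (Z : XMod) (hAZ : ANull A Z) (u : XModHom (pbXMod α (P.ell Q)) Z)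
    (n1 : (KK1 α (P.ell Q) u).Normal) (n2 : (KK2 α (P.ell Q) u).Normal)
    (nstab : ∀ (b : Q.G), ∀ m ∈ KK1 α (P.ell Q) u, Q.act b m ∈ KK1 α (P.ell Q) u)
    (nd : ∀ m ∈ KK1 α (P.ell Q) u, Q.d m ∈ KK2 α (P.ell Q) u)
    (ncomm : ∀ k ∈ KK2 α (P.ell Q) u, ∀ m : Q.M, Q.act k m * m⁻¹ ∈ KK1 α (P.ell Q) u) :
    ANull A (quotXMod Q (KK1 α (P.ell Q) u) (KK2 α (P.ell Q) u) n1 n2 nstab nd ncomm) := by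
  haveI := n1; haveI := n2
  intro φ
  have hAPQ : ANull A (P.obj Q) := (hloc _).mp (P.iso_ell_obj Q)
  have hk1 : ∀ m ∈ KK1 α (P.ell Q) u, (P.ell Q).f1 m = 1 :=
    fun m hm => KK1_ker α (P.ell Q) u hm
  have hk2 : ∀ k ∈ KK2 α (P.ell Q) u, (P.ell Q).f2 k = 1 :=
    fun k hk => KK2_ker α (P.ell Q) u hk
  have hφℓ : XModHom.comp
      (quotLift Q (KK1 α (P.ell Q) u) (KK2 α (P.ell Q) u) n1 n2 nstab nd ncomm
        (P.ell Q) hk1 hk2) φ = XModHom.triv A (P.obj Q) := hAPQ _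
  have hout1 : ∀ x : Q.M ⧸ KK1 α (P.ell Q) u,
      (QuotientGroup.mk (Quotient.out x) : Q.M ⧸ KK1 α (P.ell Q) u) = x :=
    fun x => Quotient.out_eq x
  have hout2 : ∀ x : Q.G ⧸ KK2 α (P.ell Q) u,
      (QuotientGroup.mk (Quotient.out x) : Q.G ⧸ KK2 α (P.ell Q) u) = x :=
    fun x => Quotient.out_eq x
  have hrep1 : ∀ a : A.M, (P.ell Q).f1 (Quotient.out (φ.f1 a)) = 1 := by
    intro a
    have h := congr_f1 hφℓ a
    simp only [comp_f1] at h
    rw [← hout1 (φ.f1 a)] at h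
    exact h
  have hrep2 : ∀ a : A.G, (P.ell Q).f2 (Quotient.out (φ.f2 a)) = 1 := by
    intro a
    have h := congr_f2 hφℓ a
    simp only [comp_f2] at h
    rw [← hout2 (φ.f2 a)] at h
    exact h
  have hwd1 : ∀ (m m' : Q.M) (hm : (P.ell Q).f1 m = 1) (hm' : (P.ell Q).f1 m' = 1),
      (QuotientGroup.mk m : Q.M ⧸ KK1 α (P.ell Q) u) = QuotientGroup.mk m' →
      u.f1 (pbRM α (P.ell Q) m hm) = u.f1 (pbRM α (P.ell Q) m' hm') := by
    intro m m' hm hm' hq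
    obtain ⟨hx1, hx2⟩ := QuotientGroup.eq.mp hq
    have hsplit : pbRM α (P.ell Q) m' hm'
        = pbRM α (P.ell Q) m hm * pbRM α (P.ell Q) (m⁻¹ * m') hx1 :=
      Subtype.ext (Prod.ext (one_mul (1 : (P.obj T).M)).symm (mul_inv_cancel_left m m').symm)
    rw [hsplit, map_mul, hx2, mul_one]
  have hwd2 : ∀ (m m' : Q.G) (hm : (P.ell Q).f2 m = 1) (hm' : (P.ell Q).f2 m' = 1),
      (QuotientGroup.mk m : Q.G ⧸ KK2 α (P.ell Q) u) = QuotientGroup.mk m' →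
      u.f2 (pbRG α (P.ell Q) m hm) = u.f2 (pbRG α (P.ell Q) m' hm') := by
    intro m m' hm hm' hq
    obtain ⟨hx1, hx2⟩ := QuotientGroup.eq.mp hq
    have hsplit : pbRG α (P.ell Q) m' hm'
        = pbRG α (P.ell Q) m hm * pbRG α (P.ell Q) (m⁻¹ * m') hx1 :=
      Subtype.ext (Prod.ext (one_mul (1 : (P.obj T).G)).symm (mul_inv_cancel_left m m').symm)
    rw [hsplit, map_mul, hx2, mul_one]
  have hψ := hAZ
    { f1 :=
        { toFun := fun a => u.f1 (pbRM α (P.ell Q) (Quotient.out (φ.f1 a)) (hrep1 a))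
          map_one' := by
            have e1 : (QuotientGroup.mk (Quotient.out (φ.f1 1)) : Q.M ⧸ KK1 α (P.ell Q) u)
                = QuotientGroup.mk 1 :=
              (hout1 _).trans ((map_one φ.f1).trans (QuotientGroup.mk_one _).symm)
            show u.f1 (pbRM α (P.ell Q) (Quotient.out (φ.f1 1)) (hrep1 1)) = 1
            rw [hwd1 _ _ (hrep1 1) (map_one _) e1, pbRM_one]
            exact map_one u.f1
          map_mul' := by
            intro a b
            have hmm : (P.ell Q).f1 (Quotient.out (φ.f1 a) * Quotient.out (φ.f1 b)) = 1 := by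
              rw [map_mul, hrep1, hrep1, one_mul]
            have e1 : (QuotientGroup.mk (Quotient.out (φ.f1 (a * b))) : Q.M ⧸ KK1 α (P.ell Q) u)
                = QuotientGroup.mk (Quotient.out (φ.f1 a) * Quotient.out (φ.f1 b)) :=
              (hout1 _).trans ((map_mul φ.f1 a b).trans
                ((congrArg₂ (fun x y : Q.M ⧸ KK1 α (P.ell Q) u => x * y) (hout1 (φ.f1 a)) (hout1 (φ.f1 b))).symm.trans
                  (QuotientGroup.mk_mul _ _ _).symm))
            show u.f1 (pbRM α (P.ell Q) (Quotient.out (φ.f1 (a * b))) (hrep1 (a * b)))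
                = u.f1 (pbRM α (P.ell Q) (Quotient.out (φ.f1 a)) (hrep1 a))
                  * u.f1 (pbRM α (P.ell Q) (Quotient.out (φ.f1 b)) (hrep1 b))
            rw [hwd1 _ _ (hrep1 (a * b)) hmm e1,
              pbRM_mul α (P.ell Q) _ _ (hrep1 a) (hrep1 b), map_mul] }
      f2 :=
        { toFun := fun a => u.f2 (pbRG α (P.ell Q) (Quotient.out (φ.f2 a)) (hrep2 a))
          map_one' := by
            have e1 : (QuotientGroup.mk (Quotient.out (φ.f2 1)) : Q.G ⧸ KK2 α (P.ell Q) u)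
                = QuotientGroup.mk 1 :=
              (hout2 _).trans ((map_one φ.f2).trans (QuotientGroup.mk_one _).symm)
            show u.f2 (pbRG α (P.ell Q) (Quotient.out (φ.f2 1)) (hrep2 1)) = 1
            rw [hwd2 _ _ (hrep2 1) (map_one _) e1, pbRG_one]
            exact map_one u.f2
          map_mul' := by
            intro a b
            have hmm : (P.ell Q).f2 (Quotient.out (φ.f2 a) * Quotient.out (φ.f2 b)) = 1 := by
              rw [map_mul, hrep2, hrep2, one_mul]
            have e1 : (QuotientGroup.mk (Quotient.out (φ.f2 (a * b))) : Q.G ⧸ KK2 α (P.ell Q) u)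
                = QuotientGroup.mk (Quotient.out (φ.f2 a) * Quotient.out (φ.f2 b)) :=
              (hout2 _).trans ((map_mul φ.f2 a b).trans
                ((congrArg₂ (fun x y : Q.G ⧸ KK2 α (P.ell Q) u => x * y) (hout2 (φ.f2 a)) (hout2 (φ.f2 b))).symm.trans
                  (QuotientGroup.mk_mul _ _ _).symm))
            show u.f2 (pbRG α (P.ell Q) (Quotient.out (φ.f2 (a * b))) (hrep2 (a * b)))
                = u.f2 (pbRG α (P.ell Q) (Quotient.out (φ.f2 a)) (hrep2 a))
                  * u.f2 (pbRG α (P.ell Q) (Quotient.out (φ.f2 b)) (hrep2 b))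
            rw [hwd2 _ _ (hrep2 (a * b)) hmm e1,
              pbRG_mul α (P.ell Q) _ _ (hrep2 a) (hrep2 b), map_mul] }
      comm_d := by
        intro a
        have hd1 : (P.ell Q).f2 (Q.d (Quotient.out (φ.f1 a))) = 1 := by
          rw [← (P.ell Q).comm_d, hrep1, map_one]
        show Z.d (u.f1 (pbRM α (P.ell Q) (Quotient.out (φ.f1 a)) (hrep1 a)))
            = u.f2 (pbRG α (P.ell Q) (Quotient.out (φ.f2 (A.d a))) (hrep2 (A.d a)))
        rw [u.comm_d, ← pbRM_d α (P.ell Q) (Quotient.out (φ.f1 a)) (hrep1 a) hd1]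
        refine hwd2 _ _ hd1 (hrep2 (A.d a)) ?_
        have h1 : (QuotientGroup.mk (Q.d (Quotient.out (φ.f1 a))) : Q.G ⧸ KK2 α (P.ell Q) u)
            = (quotXMod Q (KK1 α (P.ell Q) u) (KK2 α (P.ell Q) u) n1 n2 nstab nd ncomm).d
                (QuotientGroup.mk (Quotient.out (φ.f1 a))) := rfl
        rw [h1]
        exact ((congrArg (quotXMod Q (KK1 α (P.ell Q) u) (KK2 α (P.ell Q) u) n1 n2 nstab nd ncomm).d
          (hout1 (φ.f1 a))).trans (φ.comm_d a)).trans (hout2 _).symm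
      equiv := by
        intro b n
        have hact1 : (P.ell Q).f1
            (Q.act (Quotient.out (φ.f2 b)) (Quotient.out (φ.f1 n))) = 1 := by
          rw [(P.ell Q).equiv, hrep1, map_one]
        show u.f1 (pbRM α (P.ell Q) (Quotient.out (φ.f1 (A.act b n))) (hrep1 (A.act b n)))
            = Z.act (u.f2 (pbRG α (P.ell Q) (Quotient.out (φ.f2 b)) (hrep2 b)))
                (u.f1 (pbRM α (P.ell Q) (Quotient.out (φ.f1 n)) (hrep1 n)))
        rw [← u.equiv,
          ← pbRM_act' α (P.ell Q) (Quotient.out (φ.f2 b)) (hrep2 b)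
            (Quotient.out (φ.f1 n)) (hrep1 n) hact1]
        refine hwd1 _ _ (hrep1 (A.act b n)) hact1 ?_
        have h1 : (QuotientGroup.mk
              (Q.act (Quotient.out (φ.f2 b)) (Quotient.out (φ.f1 n))) : Q.M ⧸ KK1 α (P.ell Q) u)
            = (quotXMod Q (KK1 α (P.ell Q) u) (KK2 α (P.ell Q) u) n1 n2 nstab nd ncomm).act
                (QuotientGroup.mk (Quotient.out (φ.f2 b)))
                (QuotientGroup.mk (Quotient.out (φ.f1 n))) := rfl
        exact (hout1 _).trans ((φ.equiv b n).trans
          ((congrArg₂ (fun x y =>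
            (quotXMod Q (KK1 α (P.ell Q) u) (KK2 α (P.ell Q) u) n1 n2 nstab nd ncomm).act x y)
            (hout2 (φ.f2 b)).symm (hout1 (φ.f1 n)).symm).trans h1.symm)) }
  apply XModHom.ext
  · apply MonoidHom.ext
    intro a
    have h := congr_f1 hψ a
    show φ.f1 a = 1
    rw [← hout1 (φ.f1 a)]
    exact (QuotientGroup.eq_one_iff _).mpr ⟨hrep1 a, h⟩
  · apply MonoidHom.ext
    intro a
    have h := congr_f2 hψ a
    show φ.f2 a = 1
    rw [← hout2 (φ.f2 a)]
    exact (QuotientGroup.eq_one_iff _).mpr ⟨hrep2 a, h⟩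

end Core

/-- The first projection of the pullback of `α` along the coaugmentation is an
`P`-local equivalence onto every local object. -/
theorem main_flocal (A : XMod) (P : LocalizationFunctor)
    (hloc : ∀ X : XMod, P.IsLocal X ↔ ANull A X)
    (hepi : P.RegEpiLoc) {T Q : XMod}
    (α : XModHom (P.obj T) (P.obj Q)) (hα : XModHom.RegEpi α)
    (Z : XMod) (hZ : P.IsLocal Z) : FLocal (pbFst α (P.ell Q)) Z := by
  have hs1 : Function.Surjective (pbFst α (P.ell Q)).f1 := by
    intro t
    obtain ⟨q, hq⟩ := (hepi Q).1 (α.f1 t)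
    exact ⟨⟨(t, q), hq.symm⟩, rfl⟩
  have hs2 : Function.Surjective (pbFst α (P.ell Q)).f2 := by
    intro t
    obtain ⟨q, hq⟩ := (hepi Q).2 (α.f2 t)
    exact ⟨⟨(t, q), hq.symm⟩, rfl⟩
  have hsec1 : ∀ t, (pbFst α (P.ell Q)).f1 (Function.surjInv hs1 t) = t :=
    fun t => Function.surjInv_eq hs1 t
  have hsec2 : ∀ t, (pbFst α (P.ell Q)).f2 (Function.surjInv hs2 t) = t :=
    fun t => Function.surjInv_eq hs2 t
  constructor
  · intro φ φ' h
    replace h : XModHom.comp φ (pbFst α (P.ell Q)) = XModHom.comp φ' (pbFst α (P.ell Q)) := h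
    apply XModHom.ext
    · apply MonoidHom.ext
      intro t
      obtain ⟨x, rfl⟩ := hs1 t
      have := congr_f1 h x
      simpa [comp_f1] using this
    · apply MonoidHom.ext
      intro t
      obtain ⟨x, rfl⟩ := hs2 t
      have := congr_f2 h x
      simpa [comp_f2] using this
  · intro u
    have hAZ : ANull A Z := (hloc Z).mp hZ
    have n1 := KK1_normal α (P.ell Q) u hα.1
    have n2 := KK2_normal α (P.ell Q) u hα.2
    have nstab := KK1_stab α (P.ell Q) u hα.2
    have nd := KK1_d α (P.ell Q) u
    have ncomm := KK2_commutator α (P.ell Q) u hα.1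
    have hnull := quot_KK_null A P hloc T Q α Z hAZ u n1 n2 nstab nd ncomm
    obtain ⟨hker1, hker2⟩ := ker_le_of_quot_null A P hloc Q _ _ n1 n2 nstab nd ncomm hnull
    have hku1 : ∀ x : (pbXMod α (P.ell Q)).M, (pbFst α (P.ell Q)).f1 x = 1 → u.f1 x = 1 := by
      intro x hx
      have hx' : x.1.1 = 1 := hx
      have hm : (P.ell Q).f1 x.1.2 = 1 := by
        have h2 : α.f1 x.1.1 = (P.ell Q).f1 x.1.2 := x.2
        rw [hx', map_one] at h2
        exact h2.symm
      obtain ⟨hm1, hval⟩ := hker1 x.1.2 hm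
      have hxe : x = pbRM α (P.ell Q) x.1.2 hm1 := Subtype.ext (Prod.ext hx' rfl)
      rw [hxe]
      exact hval
    have hku2 : ∀ x : (pbXMod α (P.ell Q)).G, (pbFst α (P.ell Q)).f2 x = 1 → u.f2 x = 1 := by
      intro x hx
      have hx' : x.1.1 = 1 := hx
      have hm : (P.ell Q).f2 x.1.2 = 1 := by
        have h2 : α.f2 x.1.1 = (P.ell Q).f2 x.1.2 := x.2
        rw [hx', map_one] at h2
        exact h2.symm
      obtain ⟨hm1, hval⟩ := hker2 x.1.2 hm
      have hxe : x = pbRG α (P.ell Q) x.1.2 hm1 := Subtype.ext (Prod.ext hx' rfl)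
      rw [hxe]
      exact hval
    have hcong1 : ∀ x y : (pbXMod α (P.ell Q)).M,
        (pbFst α (P.ell Q)).f1 x = (pbFst α (P.ell Q)).f1 y → u.f1 x = u.f1 y := by
      intro x y h
      have h0 : (pbFst α (P.ell Q)).f1 (x⁻¹ * y) = 1 := by
        rw [map_mul, map_inv, h, inv_mul_cancel]
      have h1 := hku1 _ h0
      have h2 : u.f1 y = u.f1 x :=
        calc u.f1 y = u.f1 (x * (x⁻¹ * y)) := by rw [mul_inv_cancel_left]
          _ = u.f1 x * u.f1 (x⁻¹ * y) := map_mul _ _ _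
          _ = u.f1 x := by rw [h1, mul_one]
      exact h2.symm
    have hcong2 : ∀ x y : (pbXMod α (P.ell Q)).G,
        (pbFst α (P.ell Q)).f2 x = (pbFst α (P.ell Q)).f2 y → u.f2 x = u.f2 y := by
      intro x y h
      have h0 : (pbFst α (P.ell Q)).f2 (x⁻¹ * y) = 1 := by
        rw [map_mul, map_inv, h, inv_mul_cancel]
      have h1 := hku2 _ h0
      have h2 : u.f2 y = u.f2 x :=
        calc u.f2 y = u.f2 (x * (x⁻¹ * y)) := by rw [mul_inv_cancel_left]
          _ = u.f2 x * u.f2 (x⁻¹ * y) := map_mul _ _ _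
          _ = u.f2 x := by rw [h1, mul_one]
      exact h2.symm
    refine ⟨{
      f1 :=
        { toFun := fun t => u.f1 (Function.surjInv hs1 t)
          map_one' := by
            show u.f1 (Function.surjInv hs1 1) = 1
            have h := hcong1 (Function.surjInv hs1 1) 1 (by rw [hsec1, map_one])
            rw [h]
            exact map_one u.f1
          map_mul' := by
            intro a b
            show u.f1 (Function.surjInv hs1 (a * b))
                = u.f1 (Function.surjInv hs1 a) * u.f1 (Function.surjInv hs1 b)
            rw [← map_mul u.f1]
            refine hcong1 _ _ ?_
            rw [hsec1, map_mul, hsec1, hsec1] }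
      f2 :=
        { toFun := fun t => u.f2 (Function.surjInv hs2 t)
          map_one' := by
            show u.f2 (Function.surjInv hs2 1) = 1
            have h := hcong2 (Function.surjInv hs2 1) 1 (by rw [hsec2, map_one])
            rw [h]
            exact map_one u.f2
          map_mul' := by
            intro a b
            show u.f2 (Function.surjInv hs2 (a * b))
                = u.f2 (Function.surjInv hs2 a) * u.f2 (Function.surjInv hs2 b)
            rw [← map_mul u.f2]
            refine hcong2 _ _ ?_
            rw [hsec2, map_mul, hsec2, hsec2] }
      comm_d := by
        intro t
        show Z.d (u.f1 (Function.surjInv hs1 t))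
            = u.f2 (Function.surjInv hs2 ((P.obj T).d t))
        rw [u.comm_d]
        refine hcong2 _ _ ?_
        rw [← (pbFst α (P.ell Q)).comm_d, hsec1, hsec2]
      equiv := by
        intro b n
        show u.f1 (Function.surjInv hs1 ((P.obj T).act b n))
            = Z.act (u.f2 (Function.surjInv hs2 b)) (u.f1 (Function.surjInv hs1 n))
        rw [← u.equiv]
        refine hcong1 _ _ ?_
        rw [(pbFst α (P.ell Q)).equiv]
        rw [hsec1]
        rw [hsec2]
        rw [hsec1] }, ?_⟩
    apply XModHom.ext
    · apply MonoidHom.ext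
      intro x
      show u.f1 (Function.surjInv hs1 ((pbFst α (P.ell Q)).f1 x)) = u.f1 x
      exact hcong1 _ _ (hsec1 _)
    · apply MonoidHom.ext
      intro x
      show u.f2 (Function.surjInv hs2 ((pbFst α (P.ell Q)).f2 x)) = u.f2 x
      exact hcong2 _ _ (hsec2 _)

end XModAux

/-- Any nullification functor `P_A` (a localization functor
whose local objects are exactly the `A`-null crossed modules and whose
coaugmentation is a regular epimorphism) is admissible for the class of
regular epimorphisms. -/
theorem nullification_admissible (A : XMod) (P : LocalizationFunctor)
    (hloc : ∀ X : XMod, P.IsLocal X ↔ ANull A X)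
    (hepi : P.RegEpiLoc) :
    P.Admissible := by
  intro T Q α hα
  have hiso : XModHom.IsIso (P.map (pbFst α (P.ell Q))) :=
    XModAux.iso_of_flocal P _ (fun Z hZ => XModAux.main_flocal A P hloc hepi α hα Z hZ)
  have sq : XModHom.comp α (pbFst α (P.ell Q)) = XModHom.comp (P.ell Q) (pbSnd α (P.ell Q)) :=
    XModHom.ext (MonoidHom.ext fun x => x.2) (MonoidHom.ext fun x => x.2)
  have hsq : XModHom.comp (P.map α) (P.map (pbFst α (P.ell Q)))
      = XModHom.comp (P.map (P.ell Q)) (P.map (pbSnd α (P.ell Q))) := by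
    rw [← P.map_comp, ← P.map_comp, sq]
  obtain ⟨θ, hθ1, hθ2⟩ := hiso
  obtain ⟨e, he1, he2⟩ := P.iso_map_ell Q
  constructor
  · exact hsq
  · intro W uu vv huv
    have hπ2 : P.map (pbSnd α (P.ell Q))
        = XModHom.comp e (XModHom.comp (P.map α) (P.map (pbFst α (P.ell Q)))) := by
      rw [hsq, XModAux.comp_assoc, he1, XModAux.id_comp]
    refine ⟨XModHom.comp θ uu, ⟨?_, ?_⟩, ?_⟩
    · rw [XModAux.comp_assoc, hθ2, XModAux.id_comp]
    · rw [hπ2]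
      calc XModHom.comp
            (XModHom.comp e (XModHom.comp (P.map α) (P.map (pbFst α (P.ell Q)))))
            (XModHom.comp θ uu)
          = XModHom.comp e (XModHom.comp (P.map α)
              (XModHom.comp (P.map (pbFst α (P.ell Q))) (XModHom.comp θ uu))) := by
            simp only [XModAux.comp_assoc]
        _ = XModHom.comp e (XModHom.comp (P.map α) uu) := by
            rw [XModAux.comp_assoc (P.map (pbFst α (P.ell Q))) θ uu, hθ2, XModAux.id_comp]
        _ = XModHom.comp e (XModHom.comp (P.map (P.ell Q)) vv) := by rw [huv]
        _ = XModHom.comp (XModHom.comp e (P.map (P.ell Q))) vv := XModAux.comp_assoc _ _ _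
        _ = vv := by rw [he1, XModAux.id_comp]
    · rintro w ⟨hw1, hw2⟩
      calc w = XModHom.comp (XModHom.id _) w := (XModAux.id_comp w).symm
        _ = XModHom.comp (XModHom.comp θ (P.map (pbFst α (P.ell Q)))) w := by rw [hθ1]
        _ = XModHom.comp θ (XModHom.comp (P.map (pbFst α (P.ell Q))) w) :=
            (XModAux.comp_assoc _ _ _).symm
        _ = XModHom.comp θ uu := by rw [hw1]
end

section
/- Let L be a regular-epi localization functor on XMod. Then every L-flat short exact sequence of crossed modules 1 → N →(κ) T →(α) Q → 1 admits a fiberwise localization. -/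
set_option linter.unusedVariables false

namespace XModHom

theorem congr_f1 {A B : XMod} {f g : XModHom A B} (h : f = g) (x : A.M) :
    f.f1 x = g.f1 x := by rw [h]

theorem congr_f2 {A B : XMod} {f g : XModHom A B} (h : f = g) (x : A.G) :
    f.f2 x = g.f2 x := by rw [h]

theorem comp_assoc {A B C D : XMod} (h : XModHom C D) (g : XModHom B C) (f : XModHom A B) :
    comp (comp h g) f = comp h (comp g f) :=
  ext rfl rfl

end XModHom

/-- From the categorical kernel property we get the set-level kernel inclusion. -/
theorem ker_sub_range {A B C : XMod} (κ' : XModHom A B) (α' : XModHom B C)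
    (h : XModHom.IsKernelOf κ' α') :
    (∀ x : B.M, α'.f1 x = 1 → ∃ n, κ'.f1 n = x) ∧
    (∀ x : B.G, α'.f2 x = 1 → ∃ n, κ'.f2 n = x) := by
  have htriv : XModHom.comp α' (kerIncl α') = XModHom.triv (kerXMod α') C := by
    apply XModHom.ext
    · exact MonoidHom.ext fun x => x.2
    · exact MonoidHom.ext fun x => x.2
  obtain ⟨v, hv, -⟩ := h.2 (kerXMod α') (kerIncl α') htriv
  constructor
  · intro x hx
    exact ⟨v.f1 ⟨x, hx⟩, XModHom.congr_f1 hv ⟨x, hx⟩⟩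
  · intro x hx
    exact ⟨v.f2 ⟨x, hx⟩, XModHom.congr_f2 hv ⟨x, hx⟩⟩

/-- The comparison map `T → LT ×_{LQ} Q` induced by `ℓ^T` and `α`. -/
def fibE (L : LocalizationFunctor) {T Q : XMod} (α : XModHom T Q) :
    XModHom T (pbXMod (L.map α) (L.ell Q)) where
  f1 :=
    { toFun := fun t => ⟨((L.ell T).f1 t, α.f1 t),
        (XModHom.congr_f1 (L.natural α) t).symm⟩
      map_one' := by
        apply Subtype.ext; apply Prod.ext <;> simp <;> first | rfl | exact map_one _
      map_mul' := fun a b =>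
        Subtype.ext (Prod.ext (map_mul (L.ell T).f1 a b) (map_mul α.f1 a b)) }
  f2 :=
    { toFun := fun t => ⟨((L.ell T).f2 t, α.f2 t),
        (XModHom.congr_f2 (L.natural α) t).symm⟩
      map_one' := by
        apply Subtype.ext; apply Prod.ext <;> simp <;> first | rfl | exact map_one _
      map_mul' := fun a b =>
        Subtype.ext (Prod.ext (map_mul (L.ell T).f2 a b) (map_mul α.f2 a b)) }
  comm_d := by
    intro t
    apply Subtype.ext; apply Prod.ext
    · exact (L.ell T).comm_d t
    · exact α.comm_d t
  equiv := by
    intro b t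
    apply Subtype.ext; apply Prod.ext
    · exact (L.ell T).equiv b t
    · exact α.equiv b t

/-- For a regular-epi localization functor `L`, every `L`-flat
short exact sequence of crossed modules admits a fiberwise localization. -/
theorem lflat_admits_fiberwise (L : LocalizationFunctor) (hL : L.RegEpiLoc)
    {N T Q : XMod} (κ : XModHom N T) (α : XModHom T Q)
    (hse : ShortExact κ α) (hflat : L.LFlat κ α) :
    L.AdmitsFiberwise κ α := by
  classical
  have hLκα : XModHom.comp (L.map α) (L.map κ) = XModHom.triv (L.obj N) (L.obj Q) := hflat.1.1
  set E := pbXMod (L.map α) (L.ell Q) with hE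
  set j := pbIn (L.map κ) (L.map α) (L.ell Q) hLκα with hj
  set p := pbSnd (L.map α) (L.ell Q) with hp
  set e := fibE L α with he
  -- e is componentwise surjective
  have hesurj1 : Function.Surjective e.f1 := by
    rintro ⟨⟨x, q⟩, hxq⟩
    have hxq' : (L.map α).f1 x = (L.ell Q).f1 q := hxq
    obtain ⟨t₀, ht₀⟩ := hse.2.1 q
    have hnatα : (L.map α).f1 ((L.ell T).f1 t₀) = (L.ell Q).f1 (α.f1 t₀) :=
      (XModHom.congr_f1 (L.natural α) t₀).symm
    have hx1 : (L.map α).f1 (x * ((L.ell T).f1 t₀)⁻¹) = 1 := by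
      rw [map_mul, map_inv, hnatα, ht₀, hxq', mul_inv_cancel]
    obtain ⟨nb, hnb⟩ := (ker_sub_range _ _ hflat.1).1 _ hx1
    obtain ⟨n, hn⟩ := (hL N).1 nb
    have hnatκ : (L.ell T).f1 (κ.f1 n) = (L.map κ).f1 ((L.ell N).f1 n) :=
      XModHom.congr_f1 (L.natural κ) n
    have hκα : α.f1 (κ.f1 n) = 1 := XModHom.congr_f1 hse.1.1 n
    refine ⟨κ.f1 n * t₀, Subtype.ext (Prod.ext ?_ ?_)⟩
    · show (L.ell T).f1 (κ.f1 n * t₀) = x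
      rw [map_mul, hnatκ, hn, hnb, inv_mul_cancel_right]
    · show α.f1 (κ.f1 n * t₀) = q
      rw [map_mul, hκα, ht₀, one_mul]
  have hesurj2 : Function.Surjective e.f2 := by
    rintro ⟨⟨x, q⟩, hxq⟩
    have hxq' : (L.map α).f2 x = (L.ell Q).f2 q := hxq
    obtain ⟨t₀, ht₀⟩ := hse.2.2 q
    have hnatα : (L.map α).f2 ((L.ell T).f2 t₀) = (L.ell Q).f2 (α.f2 t₀) :=
      (XModHom.congr_f2 (L.natural α) t₀).symm
    have hx1 : (L.map α).f2 (x * ((L.ell T).f2 t₀)⁻¹) = 1 := by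
      rw [map_mul, map_inv, hnatα, ht₀, hxq', mul_inv_cancel]
    obtain ⟨nb, hnb⟩ := (ker_sub_range _ _ hflat.1).2 _ hx1
    obtain ⟨n, hn⟩ := (hL N).2 nb
    have hnatκ : (L.ell T).f2 (κ.f2 n) = (L.map κ).f2 ((L.ell N).f2 n) :=
      XModHom.congr_f2 (L.natural κ) n
    have hκα : α.f2 (κ.f2 n) = 1 := XModHom.congr_f2 hse.1.1 n
    refine ⟨κ.f2 n * t₀, Subtype.ext (Prod.ext ?_ ?_)⟩
    · show (L.ell T).f2 (κ.f2 n * t₀) = x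
      rw [map_mul, hnatκ, hn, hnb, inv_mul_cancel_right]
    · show α.f2 (κ.f2 n * t₀) = q
      rw [map_mul, hκα, ht₀, one_mul]
  -- L(e) is componentwise surjective
  have hLe1 : Function.Surjective (L.map e).f1 := by
    intro y
    obtain ⟨z, hz⟩ := (hL E).1 y
    obtain ⟨t, ht⟩ := hesurj1 z
    refine ⟨(L.ell T).f1 t, ?_⟩
    have hnat : (L.ell E).f1 (e.f1 t) = (L.map e).f1 ((L.ell T).f1 t) :=
      XModHom.congr_f1 (L.natural e) t
    rw [← hnat, ht, hz]
  have hLe2 : Function.Surjective (L.map e).f2 := by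
    intro y
    obtain ⟨z, hz⟩ := (hL E).2 y
    obtain ⟨t, ht⟩ := hesurj2 z
    refine ⟨(L.ell T).f2 t, ?_⟩
    have hnat : (L.ell E).f2 (e.f2 t) = (L.map e).f2 ((L.ell T).f2 t) :=
      XModHom.congr_f2 (L.natural e) t
    rw [← hnat, ht, hz]
  -- the retraction of L(e)
  obtain ⟨s, hs1, hs2⟩ := L.iso_map_ell T
  have hfst : XModHom.comp (pbFst (L.map α) (L.ell Q)) e = L.ell T :=
    XModHom.ext (MonoidHom.ext fun _ => rfl) (MonoidHom.ext fun _ => rfl)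
  set r := XModHom.comp s (L.map (pbFst (L.map α) (L.ell Q))) with hr
  have hr1 : XModHom.comp r (L.map e) = XModHom.id (L.obj T) := by
    rw [hr, XModHom.comp_assoc, ← L.map_comp, hfst, hs1]
  have hr2 : XModHom.comp (L.map e) r = XModHom.id (L.obj E) := by
    apply XModHom.ext
    · apply MonoidHom.ext; intro y
      obtain ⟨w, hw⟩ := hLe1 y
      show (L.map e).f1 (r.f1 y) = y
      rw [← hw]
      exact congrArg (L.map e).f1 (XModHom.congr_f1 hr1 w)
    · apply MonoidHom.ext; intro y
      obtain ⟨w, hw⟩ := hLe2 y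
      show (L.map e).f2 (r.f2 y) = y
      rw [← hw]
      exact congrArg (L.map e).f2 (XModHom.congr_f2 hr1 w)
  refine ⟨E, j, p, e, ⟨⟨?_, ?_⟩, ?_, ?_⟩, ⟨r, hr1, hr2⟩, ?_, ?_⟩
  · -- comp p j = triv
    exact XModHom.ext (MonoidHom.ext fun _ => rfl) (MonoidHom.ext fun _ => rfl)
  · -- kernel universal property
    intro X u hu
    have hu1 : ∀ x : X.M, (u.f1 x).1.2 = 1 :=
      fun x => XModHom.congr_f1 hu x
    have hu2 : ∀ x : X.G, (u.f2 x).1.2 = 1 :=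
      fun x => XModHom.congr_f2 hu x
    set w := XModHom.comp (pbFst (L.map α) (L.ell Q)) u with hwdef
    have hw : XModHom.comp (L.map α) w = XModHom.triv X (L.obj Q) := by
      apply XModHom.ext
      · apply MonoidHom.ext; intro x
        show (L.map α).f1 (u.f1 x).1.1 = 1
        have hmem : (L.map α).f1 (u.f1 x).1.1 =
            (L.ell Q).f1 (u.f1 x).1.2 := (u.f1 x).2
        rw [hmem, hu1 x, map_one]
      · apply MonoidHom.ext; intro x
        show (L.map α).f2 (u.f2 x).1.1 = 1
        have hmem : (L.map α).f2 (u.f2 x).1.1 =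
            (L.ell Q).f2 (u.f2 x).1.2 := (u.f2 x).2
        rw [hmem, hu2 x, map_one]
    obtain ⟨v, hv, hvu⟩ := hflat.1.2 X w hw
    refine ⟨v, ?_, ?_⟩
    · apply XModHom.ext
      · apply MonoidHom.ext; intro x
        apply Subtype.ext; apply Prod.ext
        · exact XModHom.congr_f1 hv x
        · exact (hu1 x).symm
      · apply MonoidHom.ext; intro x
        apply Subtype.ext; apply Prod.ext
        · exact XModHom.congr_f2 hv x
        · exact (hu2 x).symm
    · intro v' hv'
      apply hvu
      apply XModHom.ext
      · apply MonoidHom.ext; intro x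
        exact congrArg (fun z : ↥(pbM (L.map α) (L.ell Q)) => z.1.1)
          (XModHom.congr_f1 hv' x)
      · apply MonoidHom.ext; intro x
        exact congrArg (fun z : ↥(pbG (L.map α) (L.ell Q)) => z.1.1)
          (XModHom.congr_f2 hv' x)
  · -- p surjective on level 1
    intro q
    obtain ⟨a, ha⟩ := hflat.2.1 ((L.ell Q).f1 q)
    exact ⟨⟨(a, q), ha⟩, rfl⟩
  · -- p surjective on level 2
    intro q
    obtain ⟨a, ha⟩ := hflat.2.2 ((L.ell Q).f2 q)
    exact ⟨⟨(a, q), ha⟩, rfl⟩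
  · -- comp e κ = comp j (ell N)
    apply XModHom.ext
    · apply MonoidHom.ext; intro n
      apply Subtype.ext; apply Prod.ext
      · exact XModHom.congr_f1 (L.natural κ) n
      · exact XModHom.congr_f1 hse.1.1 n
    · apply MonoidHom.ext; intro n
      apply Subtype.ext; apply Prod.ext
      · exact XModHom.congr_f2 (L.natural κ) n
      · exact XModHom.congr_f2 hse.1.1 n
  · -- comp p e = α
    exact XModHom.ext (MonoidHom.ext fun _ => rfl) (MonoidHom.ext fun _ => rfl)
end
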